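/- Let x₀, x₁, x₂, x₃, x₄ be points of ℝ³ with x₁ ≠ x₃, x₂ ≠ x₄ and x₁ ≠ x₄, let A : ℝ³ → ℝ³ be an invertible affine map with linear part L, and set x'_i = A x_i for i = 0,…,4. Define: ⁵q₀(t,s,r) as the Cayley–Menger determinant of (x₁,x₂,x₃,x₄) in which dist(x₁,x₃)² is replaced by t², dist(x₂,x₄)² by s², and dist(x₁,x₄)² by r²; ⁵q₁(s) as that of (x₀,x₂,x₃,x₄) with dist(x₂,x₄)² replaced by s²; ⁵q₂(t,r) as that of (x₀,x₁,x₃,x₄) with dist(x₁,x₃)² replaced by t² and dist(x₁,x₄)² by r²; ⁵q₃(s,r) as that of (x₀,x₁,x₂,x₄) with dist(x₂,x₄)² replaced by s² and dist(x₁,x₄)² by r²; ⁵q₄(t) as that of (x₀,x₁,x₂,x₃) with dist(x₁,x₃)² replaced by t²; and ⁵q(t,s,r) as the 6×6 Cayley–Menger determinant of all five points (x₀,x₁,x₂,x₃,x₄) with dist(x₁,x₃)² replaced by t², dist(x₂,x₄)² by s², and dist(x₁,x₄)² by r². Define the primed polynomials in the same way from the primed points. Then the system of seven equations ⁵q'₀(t',s',r')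 = α·⁵q₀(t,s,r), ⁵q'₁(s') = α·⁵q₁(s), ⁵q'₂(t',r') = α·⁵q₂(t,r), ⁵q'₃(s',r') = α·⁵q₃(s,r), ⁵q'₄(t') = α·⁵q₄(t), ⁵q(t,s,r) = 0, ⁵q'(t',s',r') = 0 has a solution with α > 0, t > 0, s > 0, r > 0, t' > 0, s' > 0, r' > 0; namely α = (det L)², t = dist(x₁,x₃), s = dist(x₂,x₄), r = dist(x₁,x₄), t' = dist(x'₁,x'₃), s' = dist(x'₂,x'₄), r' = dist(x'₁,x'₄). -/
import Mathlib


/-- The Cayley–Menger-type determinant built from the six prescribed squared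
distances `d01, d02, d03, d12, d13, d23` of a quadruple of points: the determinant
of the `5 × 5` matrix with `0` in the corner, `1`'s in the rest of the first row
and column, and the `d_{ij}`'s placed symmetrically. -/
noncomputable def cmQ (d01 d02 d03 d12 d13 d23 : ℝ) : ℝ :=
  Matrix.det !![0, 1, 1, 1, 1;
                1, 0, d01, d02, d03;
                1, d01, 0, d12, d13;
                1, d02, d12, 0, d23;
                1, d03, d13, d23, 0]

/-- The Cayley–Menger-type determinant built from the ten prescribed squared
distances of a quintuple of points: the determinant of the `6 × 6` matrix with
`0` in the corner, `1`'s in the rest of the first row and column, and the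
`d_{ij}`'s placed symmetrically. -/
noncomputable def cmP (d01 d02 d03 d04 d12 d13 d14 d23 d24 d34 : ℝ) : ℝ :=
  Matrix.det !![0, 1, 1, 1, 1, 1;
                1, 0, d01, d02, d03, d04;
                1, d01, 0, d12, d13, d14;
                1, d02, d12, 0, d23, d24;
                1, d03, d13, d23, 0, d34;
                1, d04, d14, d24, d34, 0]

/-- `⁵q₀(t,s,r)`: the Cayley–Menger determinant of the quadruple `(x₁,x₂,x₃,x₄)`
in which `dist(x₁,x₃)²` is replaced by `t²`, `dist(x₂,x₄)²` by `s²`, and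
`dist(x₁,x₄)²` by `r²`. -/
noncomputable def q50 (x : Fin 5 → EuclideanSpace ℝ (Fin 3)) (t s r : ℝ) : ℝ :=
  cmQ (dist (x 1) (x 2) ^ 2) (t ^ 2) (r ^ 2)
      (dist (x 2) (x 3) ^ 2) (s ^ 2) (dist (x 3) (x 4) ^ 2)

/-- `⁵q₁(s)`: the Cayley–Menger determinant of the quadruple `(x₀,x₂,x₃,x₄)`
in which `dist(x₂,x₄)²` is replaced by `s²`. -/
noncomputable def q51 (x : Fin 5 → EuclideanSpace ℝ (Fin 3)) (s : ℝ) : ℝ :=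
  cmQ (dist (x 0) (x 2) ^ 2) (dist (x 0) (x 3) ^ 2) (dist (x 0) (x 4) ^ 2)
      (dist (x 2) (x 3) ^ 2) (s ^ 2) (dist (x 3) (x 4) ^ 2)

/-- `⁵q₂(t,r)`: the Cayley–Menger determinant of the quadruple `(x₀,x₁,x₃,x₄)`
in which `dist(x₁,x₃)²` is replaced by `t²` and `dist(x₁,x₄)²` by `r²`. -/
noncomputable def q52 (x : Fin 5 → EuclideanSpace ℝ (Fin 3)) (t r : ℝ) : ℝ :=
  cmQ (dist (x 0) (x 1) ^ 2) (dist (x 0) (x 3) ^ 2) (dist (x 0) (x 4) ^ 2)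
      (t ^ 2) (r ^ 2) (dist (x 3) (x 4) ^ 2)

/-- `⁵q₃(s,r)`: the Cayley–Menger determinant of the quadruple `(x₀,x₁,x₂,x₄)`
in which `dist(x₂,x₄)²` is replaced by `s²` and `dist(x₁,x₄)²` by `r²`. -/
noncomputable def q53 (x : Fin 5 → EuclideanSpace ℝ (Fin 3)) (s r : ℝ) : ℝ :=
  cmQ (dist (x 0) (x 1) ^ 2) (dist (x 0) (x 2) ^ 2) (dist (x 0) (x 4) ^ 2)
      (dist (x 1) (x 2) ^ 2) (r ^ 2) (s ^ 2)

/-- `⁵q₄(t)`: the Cayley–Menger determinant of the quadruple `(x₀,x₁,x₂,x₃)`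
in which `dist(x₁,x₃)²` is replaced by `t²`. -/
noncomputable def q54 (x : Fin 5 → EuclideanSpace ℝ (Fin 3)) (t : ℝ) : ℝ :=
  cmQ (dist (x 0) (x 1) ^ 2) (dist (x 0) (x 2) ^ 2) (dist (x 0) (x 3) ^ 2)
      (dist (x 1) (x 2) ^ 2) (t ^ 2) (dist (x 2) (x 3) ^ 2)

/-- `⁵q(t,s,r)`: the `6 × 6` Cayley–Menger determinant of all five points
`(x₀,x₁,x₂,x₃,x₄)` in which `dist(x₁,x₃)²` is replaced by `t²`, `dist(x₂,x₄)²`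
by `s²`, and `dist(x₁,x₄)²` by `r²`. -/
noncomputable def q5full (x : Fin 5 → EuclideanSpace ℝ (Fin 3)) (t s r : ℝ) : ℝ :=
  cmP (dist (x 0) (x 1) ^ 2) (dist (x 0) (x 2) ^ 2) (dist (x 0) (x 3) ^ 2)
      (dist (x 0) (x 4) ^ 2) (dist (x 1) (x 2) ^ 2) (t ^ 2) (r ^ 2)
      (dist (x 2) (x 3) ^ 2) (s ^ 2) (dist (x 3) (x 4) ^ 2)

set_option maxHeartbeats 4000000
set_option maxRecDepth 10000
set_option linter.unreachableTactic false
set_option linter.unusedTactic false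
set_option linter.unnecessarySeqFocus false

namespace ValencyFiveAux

lemma finSucc_3_0 : Fin.succ (0 : Fin 3) = 1 := rfl
lemma finSucc_3_1 : Fin.succ (1 : Fin 3) = 2 := rfl
lemma finSucc_3_2 : Fin.succ (2 : Fin 3) = 3 := rfl
lemma finSA_3_0_0 : Fin.succAbove (0 : Fin 4) (0 : Fin 3) = 1 := rfl
lemma finSA_3_0_1 : Fin.succAbove (0 : Fin 4) (1 : Fin 3) = 2 := rfl
lemma finSA_3_0_2 : Fin.succAbove (0 : Fin 4) (2 : Fin 3) = 3 := rfl
lemma finSA_3_1_0 : Fin.succAbove (1 : Fin 4) (0 : Fin 3) = 0 := rfl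
lemma finSA_3_1_1 : Fin.succAbove (1 : Fin 4) (1 : Fin 3) = 2 := rfl
lemma finSA_3_1_2 : Fin.succAbove (1 : Fin 4) (2 : Fin 3) = 3 := rfl
lemma finSA_3_2_0 : Fin.succAbove (2 : Fin 4) (0 : Fin 3) = 0 := rfl
lemma finSA_3_2_1 : Fin.succAbove (2 : Fin 4) (1 : Fin 3) = 1 := rfl
lemma finSA_3_2_2 : Fin.succAbove (2 : Fin 4) (2 : Fin 3) = 3 := rfl
lemma finSA_3_3_0 : Fin.succAbove (3 : Fin 4) (0 : Fin 3) = 0 := rfl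
lemma finSA_3_3_1 : Fin.succAbove (3 : Fin 4) (1 : Fin 3) = 1 := rfl
lemma finSA_3_3_2 : Fin.succAbove (3 : Fin 4) (2 : Fin 3) = 2 := rfl
lemma finSucc_4_0 : Fin.succ (0 : Fin 4) = 1 := rfl
lemma finSucc_4_1 : Fin.succ (1 : Fin 4) = 2 := rfl
lemma finSucc_4_2 : Fin.succ (2 : Fin 4) = 3 := rfl
lemma finSucc_4_3 : Fin.succ (3 : Fin 4) = 4 := rfl
lemma finSA_4_0_0 : Fin.succAbove (0 : Fin 5) (0 : Fin 4) = 1 := rfl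
lemma finSA_4_0_1 : Fin.succAbove (0 : Fin 5) (1 : Fin 4) = 2 := rfl
lemma finSA_4_0_2 : Fin.succAbove (0 : Fin 5) (2 : Fin 4) = 3 := rfl
lemma finSA_4_0_3 : Fin.succAbove (0 : Fin 5) (3 : Fin 4) = 4 := rfl
lemma finSA_4_1_0 : Fin.succAbove (1 : Fin 5) (0 : Fin 4) = 0 := rfl
lemma finSA_4_1_1 : Fin.succAbove (1 : Fin 5) (1 : Fin 4) = 2 := rfl
lemma finSA_4_1_2 : Fin.succAbove (1 : Fin 5) (2 : Fin 4) = 3 := rfl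
lemma finSA_4_1_3 : Fin.succAbove (1 : Fin 5) (3 : Fin 4) = 4 := rfl
lemma finSA_4_2_0 : Fin.succAbove (2 : Fin 5) (0 : Fin 4) = 0 := rfl
lemma finSA_4_2_1 : Fin.succAbove (2 : Fin 5) (1 : Fin 4) = 1 := rfl
lemma finSA_4_2_2 : Fin.succAbove (2 : Fin 5) (2 : Fin 4) = 3 := rfl
lemma finSA_4_2_3 : Fin.succAbove (2 : Fin 5) (3 : Fin 4) = 4 := rfl
lemma finSA_4_3_0 : Fin.succAbove (3 : Fin 5) (0 : Fin 4) = 0 := rfl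
lemma finSA_4_3_1 : Fin.succAbove (3 : Fin 5) (1 : Fin 4) = 1 := rfl
lemma finSA_4_3_2 : Fin.succAbove (3 : Fin 5) (2 : Fin 4) = 2 := rfl
lemma finSA_4_3_3 : Fin.succAbove (3 : Fin 5) (3 : Fin 4) = 4 := rfl
lemma finSA_4_4_0 : Fin.succAbove (4 : Fin 5) (0 : Fin 4) = 0 := rfl
lemma finSA_4_4_1 : Fin.succAbove (4 : Fin 5) (1 : Fin 4) = 1 := rfl
lemma finSA_4_4_2 : Fin.succAbove (4 : Fin 5) (2 : Fin 4) = 2 := rfl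
lemma finSA_4_4_3 : Fin.succAbove (4 : Fin 5) (3 : Fin 4) = 3 := rfl
lemma finSucc_5_0 : Fin.succ (0 : Fin 5) = 1 := rfl
lemma finSucc_5_1 : Fin.succ (1 : Fin 5) = 2 := rfl
lemma finSucc_5_2 : Fin.succ (2 : Fin 5) = 3 := rfl
lemma finSucc_5_3 : Fin.succ (3 : Fin 5) = 4 := rfl
lemma finSucc_5_4 : Fin.succ (4 : Fin 5) = 5 := rfl
lemma finSA_5_0_0 : Fin.succAbove (0 : Fin 6) (0 : Fin 5) = 1 := rfl
lemma finSA_5_0_1 : Fin.succAbove (0 : Fin 6) (1 : Fin 5) = 2 := rfl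
lemma finSA_5_0_2 : Fin.succAbove (0 : Fin 6) (2 : Fin 5) = 3 := rfl
lemma finSA_5_0_3 : Fin.succAbove (0 : Fin 6) (3 : Fin 5) = 4 := rfl
lemma finSA_5_0_4 : Fin.succAbove (0 : Fin 6) (4 : Fin 5) = 5 := rfl
lemma finSA_5_1_0 : Fin.succAbove (1 : Fin 6) (0 : Fin 5) = 0 := rfl
lemma finSA_5_1_1 : Fin.succAbove (1 : Fin 6) (1 : Fin 5) = 2 := rfl
lemma finSA_5_1_2 : Fin.succAbove (1 : Fin 6) (2 : Fin 5) = 3 := rfl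
lemma finSA_5_1_3 : Fin.succAbove (1 : Fin 6) (3 : Fin 5) = 4 := rfl
lemma finSA_5_1_4 : Fin.succAbove (1 : Fin 6) (4 : Fin 5) = 5 := rfl
lemma finSA_5_2_0 : Fin.succAbove (2 : Fin 6) (0 : Fin 5) = 0 := rfl
lemma finSA_5_2_1 : Fin.succAbove (2 : Fin 6) (1 : Fin 5) = 1 := rfl
lemma finSA_5_2_2 : Fin.succAbove (2 : Fin 6) (2 : Fin 5) = 3 := rfl
lemma finSA_5_2_3 : Fin.succAbove (2 : Fin 6) (3 : Fin 5) = 4 := rfl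
lemma finSA_5_2_4 : Fin.succAbove (2 : Fin 6) (4 : Fin 5) = 5 := rfl
lemma finSA_5_3_0 : Fin.succAbove (3 : Fin 6) (0 : Fin 5) = 0 := rfl
lemma finSA_5_3_1 : Fin.succAbove (3 : Fin 6) (1 : Fin 5) = 1 := rfl
lemma finSA_5_3_2 : Fin.succAbove (3 : Fin 6) (2 : Fin 5) = 2 := rfl
lemma finSA_5_3_3 : Fin.succAbove (3 : Fin 6) (3 : Fin 5) = 4 := rfl
lemma finSA_5_3_4 : Fin.succAbove (3 : Fin 6) (4 : Fin 5) = 5 := rfl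
lemma finSA_5_4_0 : Fin.succAbove (4 : Fin 6) (0 : Fin 5) = 0 := rfl
lemma finSA_5_4_1 : Fin.succAbove (4 : Fin 6) (1 : Fin 5) = 1 := rfl
lemma finSA_5_4_2 : Fin.succAbove (4 : Fin 6) (2 : Fin 5) = 2 := rfl
lemma finSA_5_4_3 : Fin.succAbove (4 : Fin 6) (3 : Fin 5) = 3 := rfl
lemma finSA_5_4_4 : Fin.succAbove (4 : Fin 6) (4 : Fin 5) = 5 := rfl
lemma finSA_5_5_0 : Fin.succAbove (5 : Fin 6) (0 : Fin 5) = 0 := rfl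
lemma finSA_5_5_1 : Fin.succAbove (5 : Fin 6) (1 : Fin 5) = 1 := rfl
lemma finSA_5_5_2 : Fin.succAbove (5 : Fin 6) (2 : Fin 5) = 2 := rfl
lemma finSA_5_5_3 : Fin.succAbove (5 : Fin 6) (3 : Fin 5) = 3 := rfl
lemma finSA_5_5_4 : Fin.succAbove (5 : Fin 6) (4 : Fin 5) = 4 := rfl
lemma finVal_4_0 : ((0 : Fin 4) : ℕ) = 0 := rfl
lemma finVal_4_1 : ((1 : Fin 4) : ℕ) = 1 := rfl
lemma finVal_4_2 : ((2 : Fin 4) : ℕ) = 2 := rfl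
lemma finVal_4_3 : ((3 : Fin 4) : ℕ) = 3 := rfl
lemma finVal_5_0 : ((0 : Fin 5) : ℕ) = 0 := rfl
lemma finVal_5_1 : ((1 : Fin 5) : ℕ) = 1 := rfl
lemma finVal_5_2 : ((2 : Fin 5) : ℕ) = 2 := rfl
lemma finVal_5_3 : ((3 : Fin 5) : ℕ) = 3 := rfl
lemma finVal_5_4 : ((4 : Fin 5) : ℕ) = 4 := rfl
lemma finVal_6_0 : ((0 : Fin 6) : ℕ) = 0 := rfl
lemma finVal_6_1 : ((1 : Fin 6) : ℕ) = 1 := rfl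
lemma finVal_6_2 : ((2 : Fin 6) : ℕ) = 2 := rfl
lemma finVal_6_3 : ((3 : Fin 6) : ℕ) = 3 := rfl
lemma finVal_6_4 : ((4 : Fin 6) : ℕ) = 4 := rfl
lemma finVal_6_5 : ((5 : Fin 6) : ℕ) = 5 := rfl
lemma vec3_0 {α : Type*} (a0 a1 a2 : α) : ![a0, a1, a2] (0 : Fin 3) = a0 := rfl
lemma vec3_1 {α : Type*} (a0 a1 a2 : α) : ![a0, a1, a2] (1 : Fin 3) = a1 := rfl
lemma vec3_2 {α : Type*} (a0 a1 a2 : α) : ![a0, a1, a2] (2 : Fin 3) = a2 := rfl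
lemma vec4_0 {α : Type*} (a0 a1 a2 a3 : α) : ![a0, a1, a2, a3] (0 : Fin 4) = a0 := rfl
lemma vec4_1 {α : Type*} (a0 a1 a2 a3 : α) : ![a0, a1, a2, a3] (1 : Fin 4) = a1 := rfl
lemma vec4_2 {α : Type*} (a0 a1 a2 a3 : α) : ![a0, a1, a2, a3] (2 : Fin 4) = a2 := rfl
lemma vec4_3 {α : Type*} (a0 a1 a2 a3 : α) : ![a0, a1, a2, a3] (3 : Fin 4) = a3 := rfl

lemma detFour (A : Matrix (Fin 4) (Fin 4) ℝ) :
    A.det = A 0 0*A 1 1*A 2 2*A 3 3 - A 0 0*A 1 1*A 2 3*A 3 2 - A 0 0*A 1 2*A 2 1*A 3 3 + A 0 0*A 1 2*A 2 3*A 3 1 + A 0 0*A 1 3*A 2 1*A 3 2 - A 0 0*A 1 3*A 2 2*A 3 1 - A 0 1*A 1 0*A 2 2*A 3 3 + A 0 1*A 1 0*A 2 3*A 3 2 + A 0 1*A 1 2*A 2 0*A 3 3 - A 0 1*A 1 2*A 2 3*A 3 0 - A 0 1*A 1 3*A 2 0*A 3 2 + A 0 1*A 1 3*A 2 2*A 3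 0 + A 0 2*A 1 0*A 2 1*A 3 3 - A 0 2*A 1 0*A 2 3*A 3 1 - A 0 2*A 1 1*A 2 0*A 3 3 + A 0 2*A 1 1*A 2 3*A 3 0 + A 0 2*A 1 3*A 2 0*A 3 1 - A 0 2*A 1 3*A 2 1*A 3 0 - A 0 3*A 1 0*A 2 1*A 3 2 + A 0 3*A 1 0*A 2 2*A 3 1 + A 0 3*A 1 1*A 2 0*A 3 2 - A 0 3*A 1 1*A 2 2*A 3 0 - A 0 3*A 1 2*A 2 0*A 3 1 + A 0 3*A 1 2*A 2 1*A 3 0 := by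
  rw [Matrix.det_succ_row_zero, Fin.sum_univ_four]
  simp only [Matrix.det_fin_three, Matrix.submatrix_apply, finSucc_3_0, finSucc_3_1, finSucc_3_2, finSucc_4_0, finSucc_4_1, finSucc_4_2, finSucc_4_3, finSucc_5_0, finSucc_5_1, finSucc_5_2, finSucc_5_3, finSucc_5_4, finSA_3_0_0, finSA_3_0_1, finSA_3_0_2, finSA_3_1_0, finSA_3_1_1, finSA_3_1_2, finSA_3_2_0, finSA_3_2_1, finSA_3_2_2, finSA_3_3_0, finSA_3_3_1, finSA_3_3_2, finSA_4_0_0, finSA_4_0_1, finSA_4_0_2, finSA_4_0_3, finSA_4_1_0, finSA_4_1_1, finSA_4_1_2, finSA_4_1_3, finSA_4_2_0, finSA_4_2_1, finSA_4_2_2, finSA_4_2_3, finSA_4_3_0, finSA_4_3_1, finSA_4_3_2, finSA_4_3_3, finSA_4_4_0, finSA_4_4_1, finSA_4_4_2, finSA_4_4_3, finSA_5_0_0, finSA_5_0_1, finSA_5_0_2, finSA_5_0_3, finSA_5_0_4, finSA_5_1_0, finSA_5_1_1, finSA_5_1_2, finSA_5_1_3, finSA_5_1_4, finSA_5_2_0,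 finSA_5_2_1, finSA_5_2_2, finSA_5_2_3, finSA_5_2_4, finSA_5_3_0, finSA_5_3_1, finSA_5_3_2, finSA_5_3_3, finSA_5_3_4, finSA_5_4_0, finSA_5_4_1, finSA_5_4_2, finSA_5_4_3, finSA_5_4_4, finSA_5_5_0, finSA_5_5_1, finSA_5_5_2, finSA_5_5_3, finSA_5_5_4, finVal_4_0, finVal_4_1, finVal_4_2, finVal_4_3, finVal_5_0, finVal_5_1, finVal_5_2, finVal_5_3, finVal_5_4, finVal_6_0, finVal_6_1, finVal_6_2, finVal_6_3, finVal_6_4, finVal_6_5]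
  ring

lemma detFive (A : Matrix (Fin 5) (Fin 5) ℝ) :
    A.det = A 0 0*A 1 1*A 2 2*A 3 3*A 4 4 - A 0 0*A 1 1*A 2 2*A 3 4*A 4 3 - A 0 0*A 1 1*A 2 3*A 3 2*A 4 4 + A 0 0*A 1 1*A 2 3*A 3 4*A 4 2 + A 0 0*A 1 1*A 2 4*A 3 2*A 4 3 - A 0 0*A 1 1*A 2 4*A 3 3*A 4 2 - A 0 0*A 1 2*A 2 1*A 3 3*A 4 4 + A 0 0*A 1 2*A 2 1*A 3 4*A 4 3 + A 0 0*A 1 2*A 2 3*A 3 1*A 4 4 - A 0 0*A 1 2*A 2 3*A 3 4*A 4 1 - A 0 0*A 1 2*A 2 4*A 3 1*A 4 3 + A 0 0*A 1 2*A 2 4*A 3 3*A 4 1 + A 0 0*A 1 3*A 2 1*A 3 2*A 4 4 - A 0 0*A 1 3*A 2 1*A 3 4*A 4 2 - A 0 0*A 1 3*A 2 2*A 3 1*A 4 4 + A 0 0*A 1 3*A 2 2*A 3 4*A 4 1 + A 0 0*A 1 3*A 2 4*A 3 1*A 4 2 - A 0 0*A 1 3*A 2 4*A 3 2*A 4 1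 - A 0 0*A 1 4*A 2 1*A 3 2*A 4 3 + A 0 0*A 1 4*A 2 1*A 3 3*A 4 2 + A 0 0*A 1 4*A 2 2*A 3 1*A 4 3 - A 0 0*A 1 4*A 2 2*A 3 3*A 4 1 - A 0 0*A 1 4*A 2 3*A 3 1*A 4 2 + A 0 0*A 1 4*A 2 3*A 3 2*A 4 1 - A 0 1*A 1 0*A 2 2*A 3 3*A 4 4 + A 0 1*A 1 0*A 2 2*A 3 4*A 4 3 + A 0 1*A 1 0*A 2 3*A 3 2*A 4 4 - A 0 1*A 1 0*A 2 3*A 3 4*A 4 2 - A 0 1*A 1 0*A 2 4*A 3 2*A 4 3 + A 0 1*A 1 0*A 2 4*A 3 3*A 4 2 + A 0 1*A 1 2*A 2 0*A 3 3*A 4 4 - A 0 1*A 1 2*A 2 0*A 3 4*A 4 3 - A 0 1*A 1 2*A 2 3*A 3 0*A 4 4 + A 0 1*A 1 2*A 2 3*A 3 4*A 4 0 + A 0 1*A 1 2*A 2 4*A 3 0*A 4 3 - A 0 1*A 1 2*A 2 4*A 3 3*A 4 0 - A 0 1*A 1 3*A 2 0*A 3 2*A 4 4 + A 0 1*A 1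 3*A 2 0*A 3 4*A 4 2 + A 0 1*A 1 3*A 2 2*A 3 0*A 4 4 - A 0 1*A 1 3*A 2 2*A 3 4*A 4 0 - A 0 1*A 1 3*A 2 4*A 3 0*A 4 2 + A 0 1*A 1 3*A 2 4*A 3 2*A 4 0 + A 0 1*A 1 4*A 2 0*A 3 2*A 4 3 - A 0 1*A 1 4*A 2 0*A 3 3*A 4 2 - A 0 1*A 1 4*A 2 2*A 3 0*A 4 3 + A 0 1*A 1 4*A 2 2*A 3 3*A 4 0 + A 0 1*A 1 4*A 2 3*A 3 0*A 4 2 - A 0 1*A 1 4*A 2 3*A 3 2*A 4 0 + A 0 2*A 1 0*A 2 1*A 3 3*A 4 4 - A 0 2*A 1 0*A 2 1*A 3 4*A 4 3 - A 0 2*A 1 0*A 2 3*A 3 1*A 4 4 + A 0 2*A 1 0*A 2 3*A 3 4*A 4 1 + A 0 2*A 1 0*A 2 4*A 3 1*A 4 3 - A 0 2*A 1 0*A 2 4*A 3 3*A 4 1 - A 0 2*A 1 1*A 2 0*A 3 3*A 4 4 + A 0 2*A 1 1*A 2 0*A 3 4*A 4 3 + A 0 2*A 1 1*A 2 3*A 3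 0*A 4 4 - A 0 2*A 1 1*A 2 3*A 3 4*A 4 0 - A 0 2*A 1 1*A 2 4*A 3 0*A 4 3 + A 0 2*A 1 1*A 2 4*A 3 3*A 4 0 + A 0 2*A 1 3*A 2 0*A 3 1*A 4 4 - A 0 2*A 1 3*A 2 0*A 3 4*A 4 1 - A 0 2*A 1 3*A 2 1*A 3 0*A 4 4 + A 0 2*A 1 3*A 2 1*A 3 4*A 4 0 + A 0 2*A 1 3*A 2 4*A 3 0*A 4 1 - A 0 2*A 1 3*A 2 4*A 3 1*A 4 0 - A 0 2*A 1 4*A 2 0*A 3 1*A 4 3 + A 0 2*A 1 4*A 2 0*A 3 3*A 4 1 + A 0 2*A 1 4*A 2 1*A 3 0*A 4 3 - A 0 2*A 1 4*A 2 1*A 3 3*A 4 0 - A 0 2*A 1 4*A 2 3*A 3 0*A 4 1 + A 0 2*A 1 4*A 2 3*A 3 1*A 4 0 - A 0 3*A 1 0*A 2 1*A 3 2*A 4 4 + A 0 3*A 1 0*A 2 1*A 3 4*A 4 2 + A 0 3*A 1 0*A 2 2*A 3 1*A 4 4 - A 0 3*A 1 0*A 2 2*A 3 4*A 4 1 - A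 0 3*A 1 0*A 2 4*A 3 1*A 4 2 + A 0 3*A 1 0*A 2 4*A 3 2*A 4 1 + A 0 3*A 1 1*A 2 0*A 3 2*A 4 4 - A 0 3*A 1 1*A 2 0*A 3 4*A 4 2 - A 0 3*A 1 1*A 2 2*A 3 0*A 4 4 + A 0 3*A 1 1*A 2 2*A 3 4*A 4 0 + A 0 3*A 1 1*A 2 4*A 3 0*A 4 2 - A 0 3*A 1 1*A 2 4*A 3 2*A 4 0 - A 0 3*A 1 2*A 2 0*A 3 1*A 4 4 + A 0 3*A 1 2*A 2 0*A 3 4*A 4 1 + A 0 3*A 1 2*A 2 1*A 3 0*A 4 4 - A 0 3*A 1 2*A 2 1*A 3 4*A 4 0 - A 0 3*A 1 2*A 2 4*A 3 0*A 4 1 + A 0 3*A 1 2*A 2 4*A 3 1*A 4 0 + A 0 3*A 1 4*A 2 0*A 3 1*A 4 2 - A 0 3*A 1 4*A 2 0*A 3 2*A 4 1 - A 0 3*A 1 4*A 2 1*A 3 0*A 4 2 + A 0 3*A 1 4*A 2 1*A 3 2*A 4 0 + A 0 3*A 1 4*A 2 2*A 3 0*A 4 1 - A 0 3*A 1 4*A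 2 2*A 3 1*A 4 0 + A 0 4*A 1 0*A 2 1*A 3 2*A 4 3 - A 0 4*A 1 0*A 2 1*A 3 3*A 4 2 - A 0 4*A 1 0*A 2 2*A 3 1*A 4 3 + A 0 4*A 1 0*A 2 2*A 3 3*A 4 1 + A 0 4*A 1 0*A 2 3*A 3 1*A 4 2 - A 0 4*A 1 0*A 2 3*A 3 2*A 4 1 - A 0 4*A 1 1*A 2 0*A 3 2*A 4 3 + A 0 4*A 1 1*A 2 0*A 3 3*A 4 2 + A 0 4*A 1 1*A 2 2*A 3 0*A 4 3 - A 0 4*A 1 1*A 2 2*A 3 3*A 4 0 - A 0 4*A 1 1*A 2 3*A 3 0*A 4 2 + A 0 4*A 1 1*A 2 3*A 3 2*A 4 0 + A 0 4*A 1 2*A 2 0*A 3 1*A 4 3 - A 0 4*A 1 2*A 2 0*A 3 3*A 4 1 - A 0 4*A 1 2*A 2 1*A 3 0*A 4 3 + A 0 4*A 1 2*A 2 1*A 3 3*A 4 0 + A 0 4*A 1 2*A 2 3*A 3 0*A 4 1 - A 0 4*A 1 2*A 2 3*A 3 1*A 4 0 - A 0 4*A 1 3*A 2 0*A 3 1*A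 4 2 + A 0 4*A 1 3*A 2 0*A 3 2*A 4 1 + A 0 4*A 1 3*A 2 1*A 3 0*A 4 2 - A 0 4*A 1 3*A 2 1*A 3 2*A 4 0 - A 0 4*A 1 3*A 2 2*A 3 0*A 4 1 + A 0 4*A 1 3*A 2 2*A 3 1*A 4 0 := by
  rw [Matrix.det_succ_row_zero, Fin.sum_univ_five]
  simp only [detFour, Matrix.submatrix_apply, finSucc_3_0, finSucc_3_1, finSucc_3_2, finSucc_4_0, finSucc_4_1, finSucc_4_2, finSucc_4_3, finSucc_5_0, finSucc_5_1, finSucc_5_2, finSucc_5_3, finSucc_5_4, finSA_3_0_0, finSA_3_0_1, finSA_3_0_2, finSA_3_1_0, finSA_3_1_1, finSA_3_1_2, finSA_3_2_0, finSA_3_2_1, finSA_3_2_2, finSA_3_3_0, finSA_3_3_1, finSA_3_3_2, finSA_4_0_0, finSA_4_0_1, finSA_4_0_2, finSA_4_0_3, finSA_4_1_0, finSA_4_1_1, finSA_4_1_2, finSA_4_1_3, finSA_4_2_0, finSA_4_2_1, finSA_4_2_2, finSA_4_2_3, finSA_4_3_0, finSA_4_3_1, finSA_4_3_2, finSA_4_3_3,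 finSA_4_4_0, finSA_4_4_1, finSA_4_4_2, finSA_4_4_3, finSA_5_0_0, finSA_5_0_1, finSA_5_0_2, finSA_5_0_3, finSA_5_0_4, finSA_5_1_0, finSA_5_1_1, finSA_5_1_2, finSA_5_1_3, finSA_5_1_4, finSA_5_2_0, finSA_5_2_1, finSA_5_2_2, finSA_5_2_3, finSA_5_2_4, finSA_5_3_0, finSA_5_3_1, finSA_5_3_2, finSA_5_3_3, finSA_5_3_4, finSA_5_4_0, finSA_5_4_1, finSA_5_4_2, finSA_5_4_3, finSA_5_4_4, finSA_5_5_0, finSA_5_5_1, finSA_5_5_2, finSA_5_5_3, finSA_5_5_4, finVal_4_0, finVal_4_1, finVal_4_2, finVal_4_3, finVal_5_0, finVal_5_1, finVal_5_2, finVal_5_3, finVal_5_4, finVal_6_0, finVal_6_1, finVal_6_2, finVal_6_3, finVal_6_4, finVal_6_5]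
  ring

lemma detSix (A : Matrix (Fin 6) (Fin 6) ℝ) :
    A.det = A 0 0*A 1 1*A 2 2*A 3 3*A 4 4*A 5 5 - A 0 0*A 1 1*A 2 2*A 3 3*A 4 5*A 5 4 - A 0 0*A 1 1*A 2 2*A 3 4*A 4 3*A 5 5 + A 0 0*A 1 1*A 2 2*A 3 4*A 4 5*A 5 3 + A 0 0*A 1 1*A 2 2*A 3 5*A 4 3*A 5 4 - A 0 0*A 1 1*A 2 2*A 3 5*A 4 4*A 5 3 - A 0 0*A 1 1*A 2 3*A 3 2*A 4 4*A 5 5 + A 0 0*A 1 1*A 2 3*A 3 2*A 4 5*A 5 4 + A 0 0*A 1 1*A 2 3*A 3 4*A 4 2*A 5 5 - A 0 0*A 1 1*A 2 3*A 3 4*A 4 5*A 5 2 - A 0 0*A 1 1*A 2 3*A 3 5*A 4 2*A 5 4 + A 0 0*A 1 1*A 2 3*A 3 5*A 4 4*A 5 2 + A 0 0*A 1 1*A 2 4*A 3 2*A 4 3*A 5 5 - A 0 0*A 1 1*A 2 4*A 3 2*A 4 5*A 5 3 - A 0 0*A 1 1*A 2 4*A 3 3*A 4 2*A 5 5 + A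 0 0*A 1 1*A 2 4*A 3 3*A 4 5*A 5 2 + A 0 0*A 1 1*A 2 4*A 3 5*A 4 2*A 5 3 - A 0 0*A 1 1*A 2 4*A 3 5*A 4 3*A 5 2 - A 0 0*A 1 1*A 2 5*A 3 2*A 4 3*A 5 4 + A 0 0*A 1 1*A 2 5*A 3 2*A 4 4*A 5 3 + A 0 0*A 1 1*A 2 5*A 3 3*A 4 2*A 5 4 - A 0 0*A 1 1*A 2 5*A 3 3*A 4 4*A 5 2 - A 0 0*A 1 1*A 2 5*A 3 4*A 4 2*A 5 3 + A 0 0*A 1 1*A 2 5*A 3 4*A 4 3*A 5 2 - A 0 0*A 1 2*A 2 1*A 3 3*A 4 4*A 5 5 + A 0 0*A 1 2*A 2 1*A 3 3*A 4 5*A 5 4 + A 0 0*A 1 2*A 2 1*A 3 4*A 4 3*A 5 5 - A 0 0*A 1 2*A 2 1*A 3 4*A 4 5*A 5 3 - A 0 0*A 1 2*A 2 1*A 3 5*A 4 3*A 5 4 + A 0 0*A 1 2*A 2 1*A 3 5*A 4 4*A 5 3 + A 0 0*A 1 2*A 2 3*A 3 1*A 4 4*A 5 5 - A 0 0*A 1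 2*A 2 3*A 3 1*A 4 5*A 5 4 - A 0 0*A 1 2*A 2 3*A 3 4*A 4 1*A 5 5 + A 0 0*A 1 2*A 2 3*A 3 4*A 4 5*A 5 1 + A 0 0*A 1 2*A 2 3*A 3 5*A 4 1*A 5 4 - A 0 0*A 1 2*A 2 3*A 3 5*A 4 4*A 5 1 - A 0 0*A 1 2*A 2 4*A 3 1*A 4 3*A 5 5 + A 0 0*A 1 2*A 2 4*A 3 1*A 4 5*A 5 3 + A 0 0*A 1 2*A 2 4*A 3 3*A 4 1*A 5 5 - A 0 0*A 1 2*A 2 4*A 3 3*A 4 5*A 5 1 - A 0 0*A 1 2*A 2 4*A 3 5*A 4 1*A 5 3 + A 0 0*A 1 2*A 2 4*A 3 5*A 4 3*A 5 1 + A 0 0*A 1 2*A 2 5*A 3 1*A 4 3*A 5 4 - A 0 0*A 1 2*A 2 5*A 3 1*A 4 4*A 5 3 - A 0 0*A 1 2*A 2 5*A 3 3*A 4 1*A 5 4 + A 0 0*A 1 2*A 2 5*A 3 3*A 4 4*A 5 1 + A 0 0*A 1 2*A 2 5*A 3 4*A 4 1*A 5 3 - A 0 0*A 1 2*A 2 5*A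 3 4*A 4 3*A 5 1 + A 0 0*A 1 3*A 2 1*A 3 2*A 4 4*A 5 5 - A 0 0*A 1 3*A 2 1*A 3 2*A 4 5*A 5 4 - A 0 0*A 1 3*A 2 1*A 3 4*A 4 2*A 5 5 + A 0 0*A 1 3*A 2 1*A 3 4*A 4 5*A 5 2 + A 0 0*A 1 3*A 2 1*A 3 5*A 4 2*A 5 4 - A 0 0*A 1 3*A 2 1*A 3 5*A 4 4*A 5 2 - A 0 0*A 1 3*A 2 2*A 3 1*A 4 4*A 5 5 + A 0 0*A 1 3*A 2 2*A 3 1*A 4 5*A 5 4 + A 0 0*A 1 3*A 2 2*A 3 4*A 4 1*A 5 5 - A 0 0*A 1 3*A 2 2*A 3 4*A 4 5*A 5 1 - A 0 0*A 1 3*A 2 2*A 3 5*A 4 1*A 5 4 + A 0 0*A 1 3*A 2 2*A 3 5*A 4 4*A 5 1 + A 0 0*A 1 3*A 2 4*A 3 1*A 4 2*A 5 5 - A 0 0*A 1 3*A 2 4*A 3 1*A 4 5*A 5 2 - A 0 0*A 1 3*A 2 4*A 3 2*A 4 1*A 5 5 + A 0 0*A 1 3*A 2 4*A 3 2*A 4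 5*A 5 1 + A 0 0*A 1 3*A 2 4*A 3 5*A 4 1*A 5 2 - A 0 0*A 1 3*A 2 4*A 3 5*A 4 2*A 5 1 - A 0 0*A 1 3*A 2 5*A 3 1*A 4 2*A 5 4 + A 0 0*A 1 3*A 2 5*A 3 1*A 4 4*A 5 2 + A 0 0*A 1 3*A 2 5*A 3 2*A 4 1*A 5 4 - A 0 0*A 1 3*A 2 5*A 3 2*A 4 4*A 5 1 - A 0 0*A 1 3*A 2 5*A 3 4*A 4 1*A 5 2 + A 0 0*A 1 3*A 2 5*A 3 4*A 4 2*A 5 1 - A 0 0*A 1 4*A 2 1*A 3 2*A 4 3*A 5 5 + A 0 0*A 1 4*A 2 1*A 3 2*A 4 5*A 5 3 + A 0 0*A 1 4*A 2 1*A 3 3*A 4 2*A 5 5 - A 0 0*A 1 4*A 2 1*A 3 3*A 4 5*A 5 2 - A 0 0*A 1 4*A 2 1*A 3 5*A 4 2*A 5 3 + A 0 0*A 1 4*A 2 1*A 3 5*A 4 3*A 5 2 + A 0 0*A 1 4*A 2 2*A 3 1*A 4 3*A 5 5 - A 0 0*A 1 4*A 2 2*A 3 1*A 4 5*A 5 3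 - A 0 0*A 1 4*A 2 2*A 3 3*A 4 1*A 5 5 + A 0 0*A 1 4*A 2 2*A 3 3*A 4 5*A 5 1 + A 0 0*A 1 4*A 2 2*A 3 5*A 4 1*A 5 3 - A 0 0*A 1 4*A 2 2*A 3 5*A 4 3*A 5 1 - A 0 0*A 1 4*A 2 3*A 3 1*A 4 2*A 5 5 + A 0 0*A 1 4*A 2 3*A 3 1*A 4 5*A 5 2 + A 0 0*A 1 4*A 2 3*A 3 2*A 4 1*A 5 5 - A 0 0*A 1 4*A 2 3*A 3 2*A 4 5*A 5 1 - A 0 0*A 1 4*A 2 3*A 3 5*A 4 1*A 5 2 + A 0 0*A 1 4*A 2 3*A 3 5*A 4 2*A 5 1 + A 0 0*A 1 4*A 2 5*A 3 1*A 4 2*A 5 3 - A 0 0*A 1 4*A 2 5*A 3 1*A 4 3*A 5 2 - A 0 0*A 1 4*A 2 5*A 3 2*A 4 1*A 5 3 + A 0 0*A 1 4*A 2 5*A 3 2*A 4 3*A 5 1 + A 0 0*A 1 4*A 2 5*A 3 3*A 4 1*A 5 2 - A 0 0*A 1 4*A 2 5*A 3 3*A 4 2*A 5 1 + A 0 0*A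 1 5*A 2 1*A 3 2*A 4 3*A 5 4 - A 0 0*A 1 5*A 2 1*A 3 2*A 4 4*A 5 3 - A 0 0*A 1 5*A 2 1*A 3 3*A 4 2*A 5 4 + A 0 0*A 1 5*A 2 1*A 3 3*A 4 4*A 5 2 + A 0 0*A 1 5*A 2 1*A 3 4*A 4 2*A 5 3 - A 0 0*A 1 5*A 2 1*A 3 4*A 4 3*A 5 2 - A 0 0*A 1 5*A 2 2*A 3 1*A 4 3*A 5 4 + A 0 0*A 1 5*A 2 2*A 3 1*A 4 4*A 5 3 + A 0 0*A 1 5*A 2 2*A 3 3*A 4 1*A 5 4 - A 0 0*A 1 5*A 2 2*A 3 3*A 4 4*A 5 1 - A 0 0*A 1 5*A 2 2*A 3 4*A 4 1*A 5 3 + A 0 0*A 1 5*A 2 2*A 3 4*A 4 3*A 5 1 + A 0 0*A 1 5*A 2 3*A 3 1*A 4 2*A 5 4 - A 0 0*A 1 5*A 2 3*A 3 1*A 4 4*A 5 2 - A 0 0*A 1 5*A 2 3*A 3 2*A 4 1*A 5 4 + A 0 0*A 1 5*A 2 3*A 3 2*A 4 4*A 5 1 + A 0 0*A 1 5*A 2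 3*A 3 4*A 4 1*A 5 2 - A 0 0*A 1 5*A 2 3*A 3 4*A 4 2*A 5 1 - A 0 0*A 1 5*A 2 4*A 3 1*A 4 2*A 5 3 + A 0 0*A 1 5*A 2 4*A 3 1*A 4 3*A 5 2 + A 0 0*A 1 5*A 2 4*A 3 2*A 4 1*A 5 3 - A 0 0*A 1 5*A 2 4*A 3 2*A 4 3*A 5 1 - A 0 0*A 1 5*A 2 4*A 3 3*A 4 1*A 5 2 + A 0 0*A 1 5*A 2 4*A 3 3*A 4 2*A 5 1 - A 0 1*A 1 0*A 2 2*A 3 3*A 4 4*A 5 5 + A 0 1*A 1 0*A 2 2*A 3 3*A 4 5*A 5 4 + A 0 1*A 1 0*A 2 2*A 3 4*A 4 3*A 5 5 - A 0 1*A 1 0*A 2 2*A 3 4*A 4 5*A 5 3 - A 0 1*A 1 0*A 2 2*A 3 5*A 4 3*A 5 4 + A 0 1*A 1 0*A 2 2*A 3 5*A 4 4*A 5 3 + A 0 1*A 1 0*A 2 3*A 3 2*A 4 4*A 5 5 - A 0 1*A 1 0*A 2 3*A 3 2*A 4 5*A 5 4 - A 0 1*A 1 0*A 2 3*A 3 4*A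 4 2*A 5 5 + A 0 1*A 1 0*A 2 3*A 3 4*A 4 5*A 5 2 + A 0 1*A 1 0*A 2 3*A 3 5*A 4 2*A 5 4 - A 0 1*A 1 0*A 2 3*A 3 5*A 4 4*A 5 2 - A 0 1*A 1 0*A 2 4*A 3 2*A 4 3*A 5 5 + A 0 1*A 1 0*A 2 4*A 3 2*A 4 5*A 5 3 + A 0 1*A 1 0*A 2 4*A 3 3*A 4 2*A 5 5 - A 0 1*A 1 0*A 2 4*A 3 3*A 4 5*A 5 2 - A 0 1*A 1 0*A 2 4*A 3 5*A 4 2*A 5 3 + A 0 1*A 1 0*A 2 4*A 3 5*A 4 3*A 5 2 + A 0 1*A 1 0*A 2 5*A 3 2*A 4 3*A 5 4 - A 0 1*A 1 0*A 2 5*A 3 2*A 4 4*A 5 3 - A 0 1*A 1 0*A 2 5*A 3 3*A 4 2*A 5 4 + A 0 1*A 1 0*A 2 5*A 3 3*A 4 4*A 5 2 + A 0 1*A 1 0*A 2 5*A 3 4*A 4 2*A 5 3 - A 0 1*A 1 0*A 2 5*A 3 4*A 4 3*A 5 2 + A 0 1*A 1 2*A 2 0*A 3 3*A 4 4*A 5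 5 - A 0 1*A 1 2*A 2 0*A 3 3*A 4 5*A 5 4 - A 0 1*A 1 2*A 2 0*A 3 4*A 4 3*A 5 5 + A 0 1*A 1 2*A 2 0*A 3 4*A 4 5*A 5 3 + A 0 1*A 1 2*A 2 0*A 3 5*A 4 3*A 5 4 - A 0 1*A 1 2*A 2 0*A 3 5*A 4 4*A 5 3 - A 0 1*A 1 2*A 2 3*A 3 0*A 4 4*A 5 5 + A 0 1*A 1 2*A 2 3*A 3 0*A 4 5*A 5 4 + A 0 1*A 1 2*A 2 3*A 3 4*A 4 0*A 5 5 - A 0 1*A 1 2*A 2 3*A 3 4*A 4 5*A 5 0 - A 0 1*A 1 2*A 2 3*A 3 5*A 4 0*A 5 4 + A 0 1*A 1 2*A 2 3*A 3 5*A 4 4*A 5 0 + A 0 1*A 1 2*A 2 4*A 3 0*A 4 3*A 5 5 - A 0 1*A 1 2*A 2 4*A 3 0*A 4 5*A 5 3 - A 0 1*A 1 2*A 2 4*A 3 3*A 4 0*A 5 5 + A 0 1*A 1 2*A 2 4*A 3 3*A 4 5*A 5 0 + A 0 1*A 1 2*A 2 4*A 3 5*A 4 0*A 5 3 - A 0 1*A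 1 2*A 2 4*A 3 5*A 4 3*A 5 0 - A 0 1*A 1 2*A 2 5*A 3 0*A 4 3*A 5 4 + A 0 1*A 1 2*A 2 5*A 3 0*A 4 4*A 5 3 + A 0 1*A 1 2*A 2 5*A 3 3*A 4 0*A 5 4 - A 0 1*A 1 2*A 2 5*A 3 3*A 4 4*A 5 0 - A 0 1*A 1 2*A 2 5*A 3 4*A 4 0*A 5 3 + A 0 1*A 1 2*A 2 5*A 3 4*A 4 3*A 5 0 - A 0 1*A 1 3*A 2 0*A 3 2*A 4 4*A 5 5 + A 0 1*A 1 3*A 2 0*A 3 2*A 4 5*A 5 4 + A 0 1*A 1 3*A 2 0*A 3 4*A 4 2*A 5 5 - A 0 1*A 1 3*A 2 0*A 3 4*A 4 5*A 5 2 - A 0 1*A 1 3*A 2 0*A 3 5*A 4 2*A 5 4 + A 0 1*A 1 3*A 2 0*A 3 5*A 4 4*A 5 2 + A 0 1*A 1 3*A 2 2*A 3 0*A 4 4*A 5 5 - A 0 1*A 1 3*A 2 2*A 3 0*A 4 5*A 5 4 - A 0 1*A 1 3*A 2 2*A 3 4*A 4 0*A 5 5 + A 0 1*A 1 3*A 2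 2*A 3 4*A 4 5*A 5 0 + A 0 1*A 1 3*A 2 2*A 3 5*A 4 0*A 5 4 - A 0 1*A 1 3*A 2 2*A 3 5*A 4 4*A 5 0 - A 0 1*A 1 3*A 2 4*A 3 0*A 4 2*A 5 5 + A 0 1*A 1 3*A 2 4*A 3 0*A 4 5*A 5 2 + A 0 1*A 1 3*A 2 4*A 3 2*A 4 0*A 5 5 - A 0 1*A 1 3*A 2 4*A 3 2*A 4 5*A 5 0 - A 0 1*A 1 3*A 2 4*A 3 5*A 4 0*A 5 2 + A 0 1*A 1 3*A 2 4*A 3 5*A 4 2*A 5 0 + A 0 1*A 1 3*A 2 5*A 3 0*A 4 2*A 5 4 - A 0 1*A 1 3*A 2 5*A 3 0*A 4 4*A 5 2 - A 0 1*A 1 3*A 2 5*A 3 2*A 4 0*A 5 4 + A 0 1*A 1 3*A 2 5*A 3 2*A 4 4*A 5 0 + A 0 1*A 1 3*A 2 5*A 3 4*A 4 0*A 5 2 - A 0 1*A 1 3*A 2 5*A 3 4*A 4 2*A 5 0 + A 0 1*A 1 4*A 2 0*A 3 2*A 4 3*A 5 5 - A 0 1*A 1 4*A 2 0*A 3 2*A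 4 5*A 5 3 - A 0 1*A 1 4*A 2 0*A 3 3*A 4 2*A 5 5 + A 0 1*A 1 4*A 2 0*A 3 3*A 4 5*A 5 2 + A 0 1*A 1 4*A 2 0*A 3 5*A 4 2*A 5 3 - A 0 1*A 1 4*A 2 0*A 3 5*A 4 3*A 5 2 - A 0 1*A 1 4*A 2 2*A 3 0*A 4 3*A 5 5 + A 0 1*A 1 4*A 2 2*A 3 0*A 4 5*A 5 3 + A 0 1*A 1 4*A 2 2*A 3 3*A 4 0*A 5 5 - A 0 1*A 1 4*A 2 2*A 3 3*A 4 5*A 5 0 - A 0 1*A 1 4*A 2 2*A 3 5*A 4 0*A 5 3 + A 0 1*A 1 4*A 2 2*A 3 5*A 4 3*A 5 0 + A 0 1*A 1 4*A 2 3*A 3 0*A 4 2*A 5 5 - A 0 1*A 1 4*A 2 3*A 3 0*A 4 5*A 5 2 - A 0 1*A 1 4*A 2 3*A 3 2*A 4 0*A 5 5 + A 0 1*A 1 4*A 2 3*A 3 2*A 4 5*A 5 0 + A 0 1*A 1 4*A 2 3*A 3 5*A 4 0*A 5 2 - A 0 1*A 1 4*A 2 3*A 3 5*A 4 2*A 5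 0 - A 0 1*A 1 4*A 2 5*A 3 0*A 4 2*A 5 3 + A 0 1*A 1 4*A 2 5*A 3 0*A 4 3*A 5 2 + A 0 1*A 1 4*A 2 5*A 3 2*A 4 0*A 5 3 - A 0 1*A 1 4*A 2 5*A 3 2*A 4 3*A 5 0 - A 0 1*A 1 4*A 2 5*A 3 3*A 4 0*A 5 2 + A 0 1*A 1 4*A 2 5*A 3 3*A 4 2*A 5 0 - A 0 1*A 1 5*A 2 0*A 3 2*A 4 3*A 5 4 + A 0 1*A 1 5*A 2 0*A 3 2*A 4 4*A 5 3 + A 0 1*A 1 5*A 2 0*A 3 3*A 4 2*A 5 4 - A 0 1*A 1 5*A 2 0*A 3 3*A 4 4*A 5 2 - A 0 1*A 1 5*A 2 0*A 3 4*A 4 2*A 5 3 + A 0 1*A 1 5*A 2 0*A 3 4*A 4 3*A 5 2 + A 0 1*A 1 5*A 2 2*A 3 0*A 4 3*A 5 4 - A 0 1*A 1 5*A 2 2*A 3 0*A 4 4*A 5 3 - A 0 1*A 1 5*A 2 2*A 3 3*A 4 0*A 5 4 + A 0 1*A 1 5*A 2 2*A 3 3*A 4 4*A 5 0 + A 0 1*A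 1 5*A 2 2*A 3 4*A 4 0*A 5 3 - A 0 1*A 1 5*A 2 2*A 3 4*A 4 3*A 5 0 - A 0 1*A 1 5*A 2 3*A 3 0*A 4 2*A 5 4 + A 0 1*A 1 5*A 2 3*A 3 0*A 4 4*A 5 2 + A 0 1*A 1 5*A 2 3*A 3 2*A 4 0*A 5 4 - A 0 1*A 1 5*A 2 3*A 3 2*A 4 4*A 5 0 - A 0 1*A 1 5*A 2 3*A 3 4*A 4 0*A 5 2 + A 0 1*A 1 5*A 2 3*A 3 4*A 4 2*A 5 0 + A 0 1*A 1 5*A 2 4*A 3 0*A 4 2*A 5 3 - A 0 1*A 1 5*A 2 4*A 3 0*A 4 3*A 5 2 - A 0 1*A 1 5*A 2 4*A 3 2*A 4 0*A 5 3 + A 0 1*A 1 5*A 2 4*A 3 2*A 4 3*A 5 0 + A 0 1*A 1 5*A 2 4*A 3 3*A 4 0*A 5 2 - A 0 1*A 1 5*A 2 4*A 3 3*A 4 2*A 5 0 + A 0 2*A 1 0*A 2 1*A 3 3*A 4 4*A 5 5 - A 0 2*A 1 0*A 2 1*A 3 3*A 4 5*A 5 4 - A 0 2*A 1 0*A 2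 1*A 3 4*A 4 3*A 5 5 + A 0 2*A 1 0*A 2 1*A 3 4*A 4 5*A 5 3 + A 0 2*A 1 0*A 2 1*A 3 5*A 4 3*A 5 4 - A 0 2*A 1 0*A 2 1*A 3 5*A 4 4*A 5 3 - A 0 2*A 1 0*A 2 3*A 3 1*A 4 4*A 5 5 + A 0 2*A 1 0*A 2 3*A 3 1*A 4 5*A 5 4 + A 0 2*A 1 0*A 2 3*A 3 4*A 4 1*A 5 5 - A 0 2*A 1 0*A 2 3*A 3 4*A 4 5*A 5 1 - A 0 2*A 1 0*A 2 3*A 3 5*A 4 1*A 5 4 + A 0 2*A 1 0*A 2 3*A 3 5*A 4 4*A 5 1 + A 0 2*A 1 0*A 2 4*A 3 1*A 4 3*A 5 5 - A 0 2*A 1 0*A 2 4*A 3 1*A 4 5*A 5 3 - A 0 2*A 1 0*A 2 4*A 3 3*A 4 1*A 5 5 + A 0 2*A 1 0*A 2 4*A 3 3*A 4 5*A 5 1 + A 0 2*A 1 0*A 2 4*A 3 5*A 4 1*A 5 3 - A 0 2*A 1 0*A 2 4*A 3 5*A 4 3*A 5 1 - A 0 2*A 1 0*A 2 5*A 3 1*A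 4 3*A 5 4 + A 0 2*A 1 0*A 2 5*A 3 1*A 4 4*A 5 3 + A 0 2*A 1 0*A 2 5*A 3 3*A 4 1*A 5 4 - A 0 2*A 1 0*A 2 5*A 3 3*A 4 4*A 5 1 - A 0 2*A 1 0*A 2 5*A 3 4*A 4 1*A 5 3 + A 0 2*A 1 0*A 2 5*A 3 4*A 4 3*A 5 1 - A 0 2*A 1 1*A 2 0*A 3 3*A 4 4*A 5 5 + A 0 2*A 1 1*A 2 0*A 3 3*A 4 5*A 5 4 + A 0 2*A 1 1*A 2 0*A 3 4*A 4 3*A 5 5 - A 0 2*A 1 1*A 2 0*A 3 4*A 4 5*A 5 3 - A 0 2*A 1 1*A 2 0*A 3 5*A 4 3*A 5 4 + A 0 2*A 1 1*A 2 0*A 3 5*A 4 4*A 5 3 + A 0 2*A 1 1*A 2 3*A 3 0*A 4 4*A 5 5 - A 0 2*A 1 1*A 2 3*A 3 0*A 4 5*A 5 4 - A 0 2*A 1 1*A 2 3*A 3 4*A 4 0*A 5 5 + A 0 2*A 1 1*A 2 3*A 3 4*A 4 5*A 5 0 + A 0 2*A 1 1*A 2 3*A 3 5*A 4 0*A 5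 4 - A 0 2*A 1 1*A 2 3*A 3 5*A 4 4*A 5 0 - A 0 2*A 1 1*A 2 4*A 3 0*A 4 3*A 5 5 + A 0 2*A 1 1*A 2 4*A 3 0*A 4 5*A 5 3 + A 0 2*A 1 1*A 2 4*A 3 3*A 4 0*A 5 5 - A 0 2*A 1 1*A 2 4*A 3 3*A 4 5*A 5 0 - A 0 2*A 1 1*A 2 4*A 3 5*A 4 0*A 5 3 + A 0 2*A 1 1*A 2 4*A 3 5*A 4 3*A 5 0 + A 0 2*A 1 1*A 2 5*A 3 0*A 4 3*A 5 4 - A 0 2*A 1 1*A 2 5*A 3 0*A 4 4*A 5 3 - A 0 2*A 1 1*A 2 5*A 3 3*A 4 0*A 5 4 + A 0 2*A 1 1*A 2 5*A 3 3*A 4 4*A 5 0 + A 0 2*A 1 1*A 2 5*A 3 4*A 4 0*A 5 3 - A 0 2*A 1 1*A 2 5*A 3 4*A 4 3*A 5 0 + A 0 2*A 1 3*A 2 0*A 3 1*A 4 4*A 5 5 - A 0 2*A 1 3*A 2 0*A 3 1*A 4 5*A 5 4 - A 0 2*A 1 3*A 2 0*A 3 4*A 4 1*A 5 5 + A 0 2*A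 1 3*A 2 0*A 3 4*A 4 5*A 5 1 + A 0 2*A 1 3*A 2 0*A 3 5*A 4 1*A 5 4 - A 0 2*A 1 3*A 2 0*A 3 5*A 4 4*A 5 1 - A 0 2*A 1 3*A 2 1*A 3 0*A 4 4*A 5 5 + A 0 2*A 1 3*A 2 1*A 3 0*A 4 5*A 5 4 + A 0 2*A 1 3*A 2 1*A 3 4*A 4 0*A 5 5 - A 0 2*A 1 3*A 2 1*A 3 4*A 4 5*A 5 0 - A 0 2*A 1 3*A 2 1*A 3 5*A 4 0*A 5 4 + A 0 2*A 1 3*A 2 1*A 3 5*A 4 4*A 5 0 + A 0 2*A 1 3*A 2 4*A 3 0*A 4 1*A 5 5 - A 0 2*A 1 3*A 2 4*A 3 0*A 4 5*A 5 1 - A 0 2*A 1 3*A 2 4*A 3 1*A 4 0*A 5 5 + A 0 2*A 1 3*A 2 4*A 3 1*A 4 5*A 5 0 + A 0 2*A 1 3*A 2 4*A 3 5*A 4 0*A 5 1 - A 0 2*A 1 3*A 2 4*A 3 5*A 4 1*A 5 0 - A 0 2*A 1 3*A 2 5*A 3 0*A 4 1*A 5 4 + A 0 2*A 1 3*A 2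 5*A 3 0*A 4 4*A 5 1 + A 0 2*A 1 3*A 2 5*A 3 1*A 4 0*A 5 4 - A 0 2*A 1 3*A 2 5*A 3 1*A 4 4*A 5 0 - A 0 2*A 1 3*A 2 5*A 3 4*A 4 0*A 5 1 + A 0 2*A 1 3*A 2 5*A 3 4*A 4 1*A 5 0 - A 0 2*A 1 4*A 2 0*A 3 1*A 4 3*A 5 5 + A 0 2*A 1 4*A 2 0*A 3 1*A 4 5*A 5 3 + A 0 2*A 1 4*A 2 0*A 3 3*A 4 1*A 5 5 - A 0 2*A 1 4*A 2 0*A 3 3*A 4 5*A 5 1 - A 0 2*A 1 4*A 2 0*A 3 5*A 4 1*A 5 3 + A 0 2*A 1 4*A 2 0*A 3 5*A 4 3*A 5 1 + A 0 2*A 1 4*A 2 1*A 3 0*A 4 3*A 5 5 - A 0 2*A 1 4*A 2 1*A 3 0*A 4 5*A 5 3 - A 0 2*A 1 4*A 2 1*A 3 3*A 4 0*A 5 5 + A 0 2*A 1 4*A 2 1*A 3 3*A 4 5*A 5 0 + A 0 2*A 1 4*A 2 1*A 3 5*A 4 0*A 5 3 - A 0 2*A 1 4*A 2 1*A 3 5*A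 4 3*A 5 0 - A 0 2*A 1 4*A 2 3*A 3 0*A 4 1*A 5 5 + A 0 2*A 1 4*A 2 3*A 3 0*A 4 5*A 5 1 + A 0 2*A 1 4*A 2 3*A 3 1*A 4 0*A 5 5 - A 0 2*A 1 4*A 2 3*A 3 1*A 4 5*A 5 0 - A 0 2*A 1 4*A 2 3*A 3 5*A 4 0*A 5 1 + A 0 2*A 1 4*A 2 3*A 3 5*A 4 1*A 5 0 + A 0 2*A 1 4*A 2 5*A 3 0*A 4 1*A 5 3 - A 0 2*A 1 4*A 2 5*A 3 0*A 4 3*A 5 1 - A 0 2*A 1 4*A 2 5*A 3 1*A 4 0*A 5 3 + A 0 2*A 1 4*A 2 5*A 3 1*A 4 3*A 5 0 + A 0 2*A 1 4*A 2 5*A 3 3*A 4 0*A 5 1 - A 0 2*A 1 4*A 2 5*A 3 3*A 4 1*A 5 0 + A 0 2*A 1 5*A 2 0*A 3 1*A 4 3*A 5 4 - A 0 2*A 1 5*A 2 0*A 3 1*A 4 4*A 5 3 - A 0 2*A 1 5*A 2 0*A 3 3*A 4 1*A 5 4 + A 0 2*A 1 5*A 2 0*A 3 3*A 4 4*A 5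 1 + A 0 2*A 1 5*A 2 0*A 3 4*A 4 1*A 5 3 - A 0 2*A 1 5*A 2 0*A 3 4*A 4 3*A 5 1 - A 0 2*A 1 5*A 2 1*A 3 0*A 4 3*A 5 4 + A 0 2*A 1 5*A 2 1*A 3 0*A 4 4*A 5 3 + A 0 2*A 1 5*A 2 1*A 3 3*A 4 0*A 5 4 - A 0 2*A 1 5*A 2 1*A 3 3*A 4 4*A 5 0 - A 0 2*A 1 5*A 2 1*A 3 4*A 4 0*A 5 3 + A 0 2*A 1 5*A 2 1*A 3 4*A 4 3*A 5 0 + A 0 2*A 1 5*A 2 3*A 3 0*A 4 1*A 5 4 - A 0 2*A 1 5*A 2 3*A 3 0*A 4 4*A 5 1 - A 0 2*A 1 5*A 2 3*A 3 1*A 4 0*A 5 4 + A 0 2*A 1 5*A 2 3*A 3 1*A 4 4*A 5 0 + A 0 2*A 1 5*A 2 3*A 3 4*A 4 0*A 5 1 - A 0 2*A 1 5*A 2 3*A 3 4*A 4 1*A 5 0 - A 0 2*A 1 5*A 2 4*A 3 0*A 4 1*A 5 3 + A 0 2*A 1 5*A 2 4*A 3 0*A 4 3*A 5 1 + A 0 2*A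 1 5*A 2 4*A 3 1*A 4 0*A 5 3 - A 0 2*A 1 5*A 2 4*A 3 1*A 4 3*A 5 0 - A 0 2*A 1 5*A 2 4*A 3 3*A 4 0*A 5 1 + A 0 2*A 1 5*A 2 4*A 3 3*A 4 1*A 5 0 - A 0 3*A 1 0*A 2 1*A 3 2*A 4 4*A 5 5 + A 0 3*A 1 0*A 2 1*A 3 2*A 4 5*A 5 4 + A 0 3*A 1 0*A 2 1*A 3 4*A 4 2*A 5 5 - A 0 3*A 1 0*A 2 1*A 3 4*A 4 5*A 5 2 - A 0 3*A 1 0*A 2 1*A 3 5*A 4 2*A 5 4 + A 0 3*A 1 0*A 2 1*A 3 5*A 4 4*A 5 2 + A 0 3*A 1 0*A 2 2*A 3 1*A 4 4*A 5 5 - A 0 3*A 1 0*A 2 2*A 3 1*A 4 5*A 5 4 - A 0 3*A 1 0*A 2 2*A 3 4*A 4 1*A 5 5 + A 0 3*A 1 0*A 2 2*A 3 4*A 4 5*A 5 1 + A 0 3*A 1 0*A 2 2*A 3 5*A 4 1*A 5 4 - A 0 3*A 1 0*A 2 2*A 3 5*A 4 4*A 5 1 - A 0 3*A 1 0*A 2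 4*A 3 1*A 4 2*A 5 5 + A 0 3*A 1 0*A 2 4*A 3 1*A 4 5*A 5 2 + A 0 3*A 1 0*A 2 4*A 3 2*A 4 1*A 5 5 - A 0 3*A 1 0*A 2 4*A 3 2*A 4 5*A 5 1 - A 0 3*A 1 0*A 2 4*A 3 5*A 4 1*A 5 2 + A 0 3*A 1 0*A 2 4*A 3 5*A 4 2*A 5 1 + A 0 3*A 1 0*A 2 5*A 3 1*A 4 2*A 5 4 - A 0 3*A 1 0*A 2 5*A 3 1*A 4 4*A 5 2 - A 0 3*A 1 0*A 2 5*A 3 2*A 4 1*A 5 4 + A 0 3*A 1 0*A 2 5*A 3 2*A 4 4*A 5 1 + A 0 3*A 1 0*A 2 5*A 3 4*A 4 1*A 5 2 - A 0 3*A 1 0*A 2 5*A 3 4*A 4 2*A 5 1 + A 0 3*A 1 1*A 2 0*A 3 2*A 4 4*A 5 5 - A 0 3*A 1 1*A 2 0*A 3 2*A 4 5*A 5 4 - A 0 3*A 1 1*A 2 0*A 3 4*A 4 2*A 5 5 + A 0 3*A 1 1*A 2 0*A 3 4*A 4 5*A 5 2 + A 0 3*A 1 1*A 2 0*A 3 5*A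 4 2*A 5 4 - A 0 3*A 1 1*A 2 0*A 3 5*A 4 4*A 5 2 - A 0 3*A 1 1*A 2 2*A 3 0*A 4 4*A 5 5 + A 0 3*A 1 1*A 2 2*A 3 0*A 4 5*A 5 4 + A 0 3*A 1 1*A 2 2*A 3 4*A 4 0*A 5 5 - A 0 3*A 1 1*A 2 2*A 3 4*A 4 5*A 5 0 - A 0 3*A 1 1*A 2 2*A 3 5*A 4 0*A 5 4 + A 0 3*A 1 1*A 2 2*A 3 5*A 4 4*A 5 0 + A 0 3*A 1 1*A 2 4*A 3 0*A 4 2*A 5 5 - A 0 3*A 1 1*A 2 4*A 3 0*A 4 5*A 5 2 - A 0 3*A 1 1*A 2 4*A 3 2*A 4 0*A 5 5 + A 0 3*A 1 1*A 2 4*A 3 2*A 4 5*A 5 0 + A 0 3*A 1 1*A 2 4*A 3 5*A 4 0*A 5 2 - A 0 3*A 1 1*A 2 4*A 3 5*A 4 2*A 5 0 - A 0 3*A 1 1*A 2 5*A 3 0*A 4 2*A 5 4 + A 0 3*A 1 1*A 2 5*A 3 0*A 4 4*A 5 2 + A 0 3*A 1 1*A 2 5*A 3 2*A 4 0*A 5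 4 - A 0 3*A 1 1*A 2 5*A 3 2*A 4 4*A 5 0 - A 0 3*A 1 1*A 2 5*A 3 4*A 4 0*A 5 2 + A 0 3*A 1 1*A 2 5*A 3 4*A 4 2*A 5 0 - A 0 3*A 1 2*A 2 0*A 3 1*A 4 4*A 5 5 + A 0 3*A 1 2*A 2 0*A 3 1*A 4 5*A 5 4 + A 0 3*A 1 2*A 2 0*A 3 4*A 4 1*A 5 5 - A 0 3*A 1 2*A 2 0*A 3 4*A 4 5*A 5 1 - A 0 3*A 1 2*A 2 0*A 3 5*A 4 1*A 5 4 + A 0 3*A 1 2*A 2 0*A 3 5*A 4 4*A 5 1 + A 0 3*A 1 2*A 2 1*A 3 0*A 4 4*A 5 5 - A 0 3*A 1 2*A 2 1*A 3 0*A 4 5*A 5 4 - A 0 3*A 1 2*A 2 1*A 3 4*A 4 0*A 5 5 + A 0 3*A 1 2*A 2 1*A 3 4*A 4 5*A 5 0 + A 0 3*A 1 2*A 2 1*A 3 5*A 4 0*A 5 4 - A 0 3*A 1 2*A 2 1*A 3 5*A 4 4*A 5 0 - A 0 3*A 1 2*A 2 4*A 3 0*A 4 1*A 5 5 + A 0 3*A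 1 2*A 2 4*A 3 0*A 4 5*A 5 1 + A 0 3*A 1 2*A 2 4*A 3 1*A 4 0*A 5 5 - A 0 3*A 1 2*A 2 4*A 3 1*A 4 5*A 5 0 - A 0 3*A 1 2*A 2 4*A 3 5*A 4 0*A 5 1 + A 0 3*A 1 2*A 2 4*A 3 5*A 4 1*A 5 0 + A 0 3*A 1 2*A 2 5*A 3 0*A 4 1*A 5 4 - A 0 3*A 1 2*A 2 5*A 3 0*A 4 4*A 5 1 - A 0 3*A 1 2*A 2 5*A 3 1*A 4 0*A 5 4 + A 0 3*A 1 2*A 2 5*A 3 1*A 4 4*A 5 0 + A 0 3*A 1 2*A 2 5*A 3 4*A 4 0*A 5 1 - A 0 3*A 1 2*A 2 5*A 3 4*A 4 1*A 5 0 + A 0 3*A 1 4*A 2 0*A 3 1*A 4 2*A 5 5 - A 0 3*A 1 4*A 2 0*A 3 1*A 4 5*A 5 2 - A 0 3*A 1 4*A 2 0*A 3 2*A 4 1*A 5 5 + A 0 3*A 1 4*A 2 0*A 3 2*A 4 5*A 5 1 + A 0 3*A 1 4*A 2 0*A 3 5*A 4 1*A 5 2 - A 0 3*A 1 4*A 2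 0*A 3 5*A 4 2*A 5 1 - A 0 3*A 1 4*A 2 1*A 3 0*A 4 2*A 5 5 + A 0 3*A 1 4*A 2 1*A 3 0*A 4 5*A 5 2 + A 0 3*A 1 4*A 2 1*A 3 2*A 4 0*A 5 5 - A 0 3*A 1 4*A 2 1*A 3 2*A 4 5*A 5 0 - A 0 3*A 1 4*A 2 1*A 3 5*A 4 0*A 5 2 + A 0 3*A 1 4*A 2 1*A 3 5*A 4 2*A 5 0 + A 0 3*A 1 4*A 2 2*A 3 0*A 4 1*A 5 5 - A 0 3*A 1 4*A 2 2*A 3 0*A 4 5*A 5 1 - A 0 3*A 1 4*A 2 2*A 3 1*A 4 0*A 5 5 + A 0 3*A 1 4*A 2 2*A 3 1*A 4 5*A 5 0 + A 0 3*A 1 4*A 2 2*A 3 5*A 4 0*A 5 1 - A 0 3*A 1 4*A 2 2*A 3 5*A 4 1*A 5 0 - A 0 3*A 1 4*A 2 5*A 3 0*A 4 1*A 5 2 + A 0 3*A 1 4*A 2 5*A 3 0*A 4 2*A 5 1 + A 0 3*A 1 4*A 2 5*A 3 1*A 4 0*A 5 2 - A 0 3*A 1 4*A 2 5*A 3 1*A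 4 2*A 5 0 - A 0 3*A 1 4*A 2 5*A 3 2*A 4 0*A 5 1 + A 0 3*A 1 4*A 2 5*A 3 2*A 4 1*A 5 0 - A 0 3*A 1 5*A 2 0*A 3 1*A 4 2*A 5 4 + A 0 3*A 1 5*A 2 0*A 3 1*A 4 4*A 5 2 + A 0 3*A 1 5*A 2 0*A 3 2*A 4 1*A 5 4 - A 0 3*A 1 5*A 2 0*A 3 2*A 4 4*A 5 1 - A 0 3*A 1 5*A 2 0*A 3 4*A 4 1*A 5 2 + A 0 3*A 1 5*A 2 0*A 3 4*A 4 2*A 5 1 + A 0 3*A 1 5*A 2 1*A 3 0*A 4 2*A 5 4 - A 0 3*A 1 5*A 2 1*A 3 0*A 4 4*A 5 2 - A 0 3*A 1 5*A 2 1*A 3 2*A 4 0*A 5 4 + A 0 3*A 1 5*A 2 1*A 3 2*A 4 4*A 5 0 + A 0 3*A 1 5*A 2 1*A 3 4*A 4 0*A 5 2 - A 0 3*A 1 5*A 2 1*A 3 4*A 4 2*A 5 0 - A 0 3*A 1 5*A 2 2*A 3 0*A 4 1*A 5 4 + A 0 3*A 1 5*A 2 2*A 3 0*A 4 4*A 5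 1 + A 0 3*A 1 5*A 2 2*A 3 1*A 4 0*A 5 4 - A 0 3*A 1 5*A 2 2*A 3 1*A 4 4*A 5 0 - A 0 3*A 1 5*A 2 2*A 3 4*A 4 0*A 5 1 + A 0 3*A 1 5*A 2 2*A 3 4*A 4 1*A 5 0 + A 0 3*A 1 5*A 2 4*A 3 0*A 4 1*A 5 2 - A 0 3*A 1 5*A 2 4*A 3 0*A 4 2*A 5 1 - A 0 3*A 1 5*A 2 4*A 3 1*A 4 0*A 5 2 + A 0 3*A 1 5*A 2 4*A 3 1*A 4 2*A 5 0 + A 0 3*A 1 5*A 2 4*A 3 2*A 4 0*A 5 1 - A 0 3*A 1 5*A 2 4*A 3 2*A 4 1*A 5 0 + A 0 4*A 1 0*A 2 1*A 3 2*A 4 3*A 5 5 - A 0 4*A 1 0*A 2 1*A 3 2*A 4 5*A 5 3 - A 0 4*A 1 0*A 2 1*A 3 3*A 4 2*A 5 5 + A 0 4*A 1 0*A 2 1*A 3 3*A 4 5*A 5 2 + A 0 4*A 1 0*A 2 1*A 3 5*A 4 2*A 5 3 - A 0 4*A 1 0*A 2 1*A 3 5*A 4 3*A 5 2 - A 0 4*A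 1 0*A 2 2*A 3 1*A 4 3*A 5 5 + A 0 4*A 1 0*A 2 2*A 3 1*A 4 5*A 5 3 + A 0 4*A 1 0*A 2 2*A 3 3*A 4 1*A 5 5 - A 0 4*A 1 0*A 2 2*A 3 3*A 4 5*A 5 1 - A 0 4*A 1 0*A 2 2*A 3 5*A 4 1*A 5 3 + A 0 4*A 1 0*A 2 2*A 3 5*A 4 3*A 5 1 + A 0 4*A 1 0*A 2 3*A 3 1*A 4 2*A 5 5 - A 0 4*A 1 0*A 2 3*A 3 1*A 4 5*A 5 2 - A 0 4*A 1 0*A 2 3*A 3 2*A 4 1*A 5 5 + A 0 4*A 1 0*A 2 3*A 3 2*A 4 5*A 5 1 + A 0 4*A 1 0*A 2 3*A 3 5*A 4 1*A 5 2 - A 0 4*A 1 0*A 2 3*A 3 5*A 4 2*A 5 1 - A 0 4*A 1 0*A 2 5*A 3 1*A 4 2*A 5 3 + A 0 4*A 1 0*A 2 5*A 3 1*A 4 3*A 5 2 + A 0 4*A 1 0*A 2 5*A 3 2*A 4 1*A 5 3 - A 0 4*A 1 0*A 2 5*A 3 2*A 4 3*A 5 1 - A 0 4*A 1 0*A 2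 5*A 3 3*A 4 1*A 5 2 + A 0 4*A 1 0*A 2 5*A 3 3*A 4 2*A 5 1 - A 0 4*A 1 1*A 2 0*A 3 2*A 4 3*A 5 5 + A 0 4*A 1 1*A 2 0*A 3 2*A 4 5*A 5 3 + A 0 4*A 1 1*A 2 0*A 3 3*A 4 2*A 5 5 - A 0 4*A 1 1*A 2 0*A 3 3*A 4 5*A 5 2 - A 0 4*A 1 1*A 2 0*A 3 5*A 4 2*A 5 3 + A 0 4*A 1 1*A 2 0*A 3 5*A 4 3*A 5 2 + A 0 4*A 1 1*A 2 2*A 3 0*A 4 3*A 5 5 - A 0 4*A 1 1*A 2 2*A 3 0*A 4 5*A 5 3 - A 0 4*A 1 1*A 2 2*A 3 3*A 4 0*A 5 5 + A 0 4*A 1 1*A 2 2*A 3 3*A 4 5*A 5 0 + A 0 4*A 1 1*A 2 2*A 3 5*A 4 0*A 5 3 - A 0 4*A 1 1*A 2 2*A 3 5*A 4 3*A 5 0 - A 0 4*A 1 1*A 2 3*A 3 0*A 4 2*A 5 5 + A 0 4*A 1 1*A 2 3*A 3 0*A 4 5*A 5 2 + A 0 4*A 1 1*A 2 3*A 3 2*A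 4 0*A 5 5 - A 0 4*A 1 1*A 2 3*A 3 2*A 4 5*A 5 0 - A 0 4*A 1 1*A 2 3*A 3 5*A 4 0*A 5 2 + A 0 4*A 1 1*A 2 3*A 3 5*A 4 2*A 5 0 + A 0 4*A 1 1*A 2 5*A 3 0*A 4 2*A 5 3 - A 0 4*A 1 1*A 2 5*A 3 0*A 4 3*A 5 2 - A 0 4*A 1 1*A 2 5*A 3 2*A 4 0*A 5 3 + A 0 4*A 1 1*A 2 5*A 3 2*A 4 3*A 5 0 + A 0 4*A 1 1*A 2 5*A 3 3*A 4 0*A 5 2 - A 0 4*A 1 1*A 2 5*A 3 3*A 4 2*A 5 0 + A 0 4*A 1 2*A 2 0*A 3 1*A 4 3*A 5 5 - A 0 4*A 1 2*A 2 0*A 3 1*A 4 5*A 5 3 - A 0 4*A 1 2*A 2 0*A 3 3*A 4 1*A 5 5 + A 0 4*A 1 2*A 2 0*A 3 3*A 4 5*A 5 1 + A 0 4*A 1 2*A 2 0*A 3 5*A 4 1*A 5 3 - A 0 4*A 1 2*A 2 0*A 3 5*A 4 3*A 5 1 - A 0 4*A 1 2*A 2 1*A 3 0*A 4 3*A 5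 5 + A 0 4*A 1 2*A 2 1*A 3 0*A 4 5*A 5 3 + A 0 4*A 1 2*A 2 1*A 3 3*A 4 0*A 5 5 - A 0 4*A 1 2*A 2 1*A 3 3*A 4 5*A 5 0 - A 0 4*A 1 2*A 2 1*A 3 5*A 4 0*A 5 3 + A 0 4*A 1 2*A 2 1*A 3 5*A 4 3*A 5 0 + A 0 4*A 1 2*A 2 3*A 3 0*A 4 1*A 5 5 - A 0 4*A 1 2*A 2 3*A 3 0*A 4 5*A 5 1 - A 0 4*A 1 2*A 2 3*A 3 1*A 4 0*A 5 5 + A 0 4*A 1 2*A 2 3*A 3 1*A 4 5*A 5 0 + A 0 4*A 1 2*A 2 3*A 3 5*A 4 0*A 5 1 - A 0 4*A 1 2*A 2 3*A 3 5*A 4 1*A 5 0 - A 0 4*A 1 2*A 2 5*A 3 0*A 4 1*A 5 3 + A 0 4*A 1 2*A 2 5*A 3 0*A 4 3*A 5 1 + A 0 4*A 1 2*A 2 5*A 3 1*A 4 0*A 5 3 - A 0 4*A 1 2*A 2 5*A 3 1*A 4 3*A 5 0 - A 0 4*A 1 2*A 2 5*A 3 3*A 4 0*A 5 1 + A 0 4*A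 1 2*A 2 5*A 3 3*A 4 1*A 5 0 - A 0 4*A 1 3*A 2 0*A 3 1*A 4 2*A 5 5 + A 0 4*A 1 3*A 2 0*A 3 1*A 4 5*A 5 2 + A 0 4*A 1 3*A 2 0*A 3 2*A 4 1*A 5 5 - A 0 4*A 1 3*A 2 0*A 3 2*A 4 5*A 5 1 - A 0 4*A 1 3*A 2 0*A 3 5*A 4 1*A 5 2 + A 0 4*A 1 3*A 2 0*A 3 5*A 4 2*A 5 1 + A 0 4*A 1 3*A 2 1*A 3 0*A 4 2*A 5 5 - A 0 4*A 1 3*A 2 1*A 3 0*A 4 5*A 5 2 - A 0 4*A 1 3*A 2 1*A 3 2*A 4 0*A 5 5 + A 0 4*A 1 3*A 2 1*A 3 2*A 4 5*A 5 0 + A 0 4*A 1 3*A 2 1*A 3 5*A 4 0*A 5 2 - A 0 4*A 1 3*A 2 1*A 3 5*A 4 2*A 5 0 - A 0 4*A 1 3*A 2 2*A 3 0*A 4 1*A 5 5 + A 0 4*A 1 3*A 2 2*A 3 0*A 4 5*A 5 1 + A 0 4*A 1 3*A 2 2*A 3 1*A 4 0*A 5 5 - A 0 4*A 1 3*A 2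 2*A 3 1*A 4 5*A 5 0 - A 0 4*A 1 3*A 2 2*A 3 5*A 4 0*A 5 1 + A 0 4*A 1 3*A 2 2*A 3 5*A 4 1*A 5 0 + A 0 4*A 1 3*A 2 5*A 3 0*A 4 1*A 5 2 - A 0 4*A 1 3*A 2 5*A 3 0*A 4 2*A 5 1 - A 0 4*A 1 3*A 2 5*A 3 1*A 4 0*A 5 2 + A 0 4*A 1 3*A 2 5*A 3 1*A 4 2*A 5 0 + A 0 4*A 1 3*A 2 5*A 3 2*A 4 0*A 5 1 - A 0 4*A 1 3*A 2 5*A 3 2*A 4 1*A 5 0 + A 0 4*A 1 5*A 2 0*A 3 1*A 4 2*A 5 3 - A 0 4*A 1 5*A 2 0*A 3 1*A 4 3*A 5 2 - A 0 4*A 1 5*A 2 0*A 3 2*A 4 1*A 5 3 + A 0 4*A 1 5*A 2 0*A 3 2*A 4 3*A 5 1 + A 0 4*A 1 5*A 2 0*A 3 3*A 4 1*A 5 2 - A 0 4*A 1 5*A 2 0*A 3 3*A 4 2*A 5 1 - A 0 4*A 1 5*A 2 1*A 3 0*A 4 2*A 5 3 + A 0 4*A 1 5*A 2 1*A 3 0*A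 4 3*A 5 2 + A 0 4*A 1 5*A 2 1*A 3 2*A 4 0*A 5 3 - A 0 4*A 1 5*A 2 1*A 3 2*A 4 3*A 5 0 - A 0 4*A 1 5*A 2 1*A 3 3*A 4 0*A 5 2 + A 0 4*A 1 5*A 2 1*A 3 3*A 4 2*A 5 0 + A 0 4*A 1 5*A 2 2*A 3 0*A 4 1*A 5 3 - A 0 4*A 1 5*A 2 2*A 3 0*A 4 3*A 5 1 - A 0 4*A 1 5*A 2 2*A 3 1*A 4 0*A 5 3 + A 0 4*A 1 5*A 2 2*A 3 1*A 4 3*A 5 0 + A 0 4*A 1 5*A 2 2*A 3 3*A 4 0*A 5 1 - A 0 4*A 1 5*A 2 2*A 3 3*A 4 1*A 5 0 - A 0 4*A 1 5*A 2 3*A 3 0*A 4 1*A 5 2 + A 0 4*A 1 5*A 2 3*A 3 0*A 4 2*A 5 1 + A 0 4*A 1 5*A 2 3*A 3 1*A 4 0*A 5 2 - A 0 4*A 1 5*A 2 3*A 3 1*A 4 2*A 5 0 - A 0 4*A 1 5*A 2 3*A 3 2*A 4 0*A 5 1 + A 0 4*A 1 5*A 2 3*A 3 2*A 4 1*A 5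 0 - A 0 5*A 1 0*A 2 1*A 3 2*A 4 3*A 5 4 + A 0 5*A 1 0*A 2 1*A 3 2*A 4 4*A 5 3 + A 0 5*A 1 0*A 2 1*A 3 3*A 4 2*A 5 4 - A 0 5*A 1 0*A 2 1*A 3 3*A 4 4*A 5 2 - A 0 5*A 1 0*A 2 1*A 3 4*A 4 2*A 5 3 + A 0 5*A 1 0*A 2 1*A 3 4*A 4 3*A 5 2 + A 0 5*A 1 0*A 2 2*A 3 1*A 4 3*A 5 4 - A 0 5*A 1 0*A 2 2*A 3 1*A 4 4*A 5 3 - A 0 5*A 1 0*A 2 2*A 3 3*A 4 1*A 5 4 + A 0 5*A 1 0*A 2 2*A 3 3*A 4 4*A 5 1 + A 0 5*A 1 0*A 2 2*A 3 4*A 4 1*A 5 3 - A 0 5*A 1 0*A 2 2*A 3 4*A 4 3*A 5 1 - A 0 5*A 1 0*A 2 3*A 3 1*A 4 2*A 5 4 + A 0 5*A 1 0*A 2 3*A 3 1*A 4 4*A 5 2 + A 0 5*A 1 0*A 2 3*A 3 2*A 4 1*A 5 4 - A 0 5*A 1 0*A 2 3*A 3 2*A 4 4*A 5 1 - A 0 5*A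 1 0*A 2 3*A 3 4*A 4 1*A 5 2 + A 0 5*A 1 0*A 2 3*A 3 4*A 4 2*A 5 1 + A 0 5*A 1 0*A 2 4*A 3 1*A 4 2*A 5 3 - A 0 5*A 1 0*A 2 4*A 3 1*A 4 3*A 5 2 - A 0 5*A 1 0*A 2 4*A 3 2*A 4 1*A 5 3 + A 0 5*A 1 0*A 2 4*A 3 2*A 4 3*A 5 1 + A 0 5*A 1 0*A 2 4*A 3 3*A 4 1*A 5 2 - A 0 5*A 1 0*A 2 4*A 3 3*A 4 2*A 5 1 + A 0 5*A 1 1*A 2 0*A 3 2*A 4 3*A 5 4 - A 0 5*A 1 1*A 2 0*A 3 2*A 4 4*A 5 3 - A 0 5*A 1 1*A 2 0*A 3 3*A 4 2*A 5 4 + A 0 5*A 1 1*A 2 0*A 3 3*A 4 4*A 5 2 + A 0 5*A 1 1*A 2 0*A 3 4*A 4 2*A 5 3 - A 0 5*A 1 1*A 2 0*A 3 4*A 4 3*A 5 2 - A 0 5*A 1 1*A 2 2*A 3 0*A 4 3*A 5 4 + A 0 5*A 1 1*A 2 2*A 3 0*A 4 4*A 5 3 + A 0 5*A 1 1*A 2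 2*A 3 3*A 4 0*A 5 4 - A 0 5*A 1 1*A 2 2*A 3 3*A 4 4*A 5 0 - A 0 5*A 1 1*A 2 2*A 3 4*A 4 0*A 5 3 + A 0 5*A 1 1*A 2 2*A 3 4*A 4 3*A 5 0 + A 0 5*A 1 1*A 2 3*A 3 0*A 4 2*A 5 4 - A 0 5*A 1 1*A 2 3*A 3 0*A 4 4*A 5 2 - A 0 5*A 1 1*A 2 3*A 3 2*A 4 0*A 5 4 + A 0 5*A 1 1*A 2 3*A 3 2*A 4 4*A 5 0 + A 0 5*A 1 1*A 2 3*A 3 4*A 4 0*A 5 2 - A 0 5*A 1 1*A 2 3*A 3 4*A 4 2*A 5 0 - A 0 5*A 1 1*A 2 4*A 3 0*A 4 2*A 5 3 + A 0 5*A 1 1*A 2 4*A 3 0*A 4 3*A 5 2 + A 0 5*A 1 1*A 2 4*A 3 2*A 4 0*A 5 3 - A 0 5*A 1 1*A 2 4*A 3 2*A 4 3*A 5 0 - A 0 5*A 1 1*A 2 4*A 3 3*A 4 0*A 5 2 + A 0 5*A 1 1*A 2 4*A 3 3*A 4 2*A 5 0 - A 0 5*A 1 2*A 2 0*A 3 1*A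 4 3*A 5 4 + A 0 5*A 1 2*A 2 0*A 3 1*A 4 4*A 5 3 + A 0 5*A 1 2*A 2 0*A 3 3*A 4 1*A 5 4 - A 0 5*A 1 2*A 2 0*A 3 3*A 4 4*A 5 1 - A 0 5*A 1 2*A 2 0*A 3 4*A 4 1*A 5 3 + A 0 5*A 1 2*A 2 0*A 3 4*A 4 3*A 5 1 + A 0 5*A 1 2*A 2 1*A 3 0*A 4 3*A 5 4 - A 0 5*A 1 2*A 2 1*A 3 0*A 4 4*A 5 3 - A 0 5*A 1 2*A 2 1*A 3 3*A 4 0*A 5 4 + A 0 5*A 1 2*A 2 1*A 3 3*A 4 4*A 5 0 + A 0 5*A 1 2*A 2 1*A 3 4*A 4 0*A 5 3 - A 0 5*A 1 2*A 2 1*A 3 4*A 4 3*A 5 0 - A 0 5*A 1 2*A 2 3*A 3 0*A 4 1*A 5 4 + A 0 5*A 1 2*A 2 3*A 3 0*A 4 4*A 5 1 + A 0 5*A 1 2*A 2 3*A 3 1*A 4 0*A 5 4 - A 0 5*A 1 2*A 2 3*A 3 1*A 4 4*A 5 0 - A 0 5*A 1 2*A 2 3*A 3 4*A 4 0*A 5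 1 + A 0 5*A 1 2*A 2 3*A 3 4*A 4 1*A 5 0 + A 0 5*A 1 2*A 2 4*A 3 0*A 4 1*A 5 3 - A 0 5*A 1 2*A 2 4*A 3 0*A 4 3*A 5 1 - A 0 5*A 1 2*A 2 4*A 3 1*A 4 0*A 5 3 + A 0 5*A 1 2*A 2 4*A 3 1*A 4 3*A 5 0 + A 0 5*A 1 2*A 2 4*A 3 3*A 4 0*A 5 1 - A 0 5*A 1 2*A 2 4*A 3 3*A 4 1*A 5 0 + A 0 5*A 1 3*A 2 0*A 3 1*A 4 2*A 5 4 - A 0 5*A 1 3*A 2 0*A 3 1*A 4 4*A 5 2 - A 0 5*A 1 3*A 2 0*A 3 2*A 4 1*A 5 4 + A 0 5*A 1 3*A 2 0*A 3 2*A 4 4*A 5 1 + A 0 5*A 1 3*A 2 0*A 3 4*A 4 1*A 5 2 - A 0 5*A 1 3*A 2 0*A 3 4*A 4 2*A 5 1 - A 0 5*A 1 3*A 2 1*A 3 0*A 4 2*A 5 4 + A 0 5*A 1 3*A 2 1*A 3 0*A 4 4*A 5 2 + A 0 5*A 1 3*A 2 1*A 3 2*A 4 0*A 5 4 - A 0 5*A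 1 3*A 2 1*A 3 2*A 4 4*A 5 0 - A 0 5*A 1 3*A 2 1*A 3 4*A 4 0*A 5 2 + A 0 5*A 1 3*A 2 1*A 3 4*A 4 2*A 5 0 + A 0 5*A 1 3*A 2 2*A 3 0*A 4 1*A 5 4 - A 0 5*A 1 3*A 2 2*A 3 0*A 4 4*A 5 1 - A 0 5*A 1 3*A 2 2*A 3 1*A 4 0*A 5 4 + A 0 5*A 1 3*A 2 2*A 3 1*A 4 4*A 5 0 + A 0 5*A 1 3*A 2 2*A 3 4*A 4 0*A 5 1 - A 0 5*A 1 3*A 2 2*A 3 4*A 4 1*A 5 0 - A 0 5*A 1 3*A 2 4*A 3 0*A 4 1*A 5 2 + A 0 5*A 1 3*A 2 4*A 3 0*A 4 2*A 5 1 + A 0 5*A 1 3*A 2 4*A 3 1*A 4 0*A 5 2 - A 0 5*A 1 3*A 2 4*A 3 1*A 4 2*A 5 0 - A 0 5*A 1 3*A 2 4*A 3 2*A 4 0*A 5 1 + A 0 5*A 1 3*A 2 4*A 3 2*A 4 1*A 5 0 - A 0 5*A 1 4*A 2 0*A 3 1*A 4 2*A 5 3 + A 0 5*A 1 4*A 2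 0*A 3 1*A 4 3*A 5 2 + A 0 5*A 1 4*A 2 0*A 3 2*A 4 1*A 5 3 - A 0 5*A 1 4*A 2 0*A 3 2*A 4 3*A 5 1 - A 0 5*A 1 4*A 2 0*A 3 3*A 4 1*A 5 2 + A 0 5*A 1 4*A 2 0*A 3 3*A 4 2*A 5 1 + A 0 5*A 1 4*A 2 1*A 3 0*A 4 2*A 5 3 - A 0 5*A 1 4*A 2 1*A 3 0*A 4 3*A 5 2 - A 0 5*A 1 4*A 2 1*A 3 2*A 4 0*A 5 3 + A 0 5*A 1 4*A 2 1*A 3 2*A 4 3*A 5 0 + A 0 5*A 1 4*A 2 1*A 3 3*A 4 0*A 5 2 - A 0 5*A 1 4*A 2 1*A 3 3*A 4 2*A 5 0 - A 0 5*A 1 4*A 2 2*A 3 0*A 4 1*A 5 3 + A 0 5*A 1 4*A 2 2*A 3 0*A 4 3*A 5 1 + A 0 5*A 1 4*A 2 2*A 3 1*A 4 0*A 5 3 - A 0 5*A 1 4*A 2 2*A 3 1*A 4 3*A 5 0 - A 0 5*A 1 4*A 2 2*A 3 3*A 4 0*A 5 1 + A 0 5*A 1 4*A 2 2*A 3 3*A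 4 1*A 5 0 + A 0 5*A 1 4*A 2 3*A 3 0*A 4 1*A 5 2 - A 0 5*A 1 4*A 2 3*A 3 0*A 4 2*A 5 1 - A 0 5*A 1 4*A 2 3*A 3 1*A 4 0*A 5 2 + A 0 5*A 1 4*A 2 3*A 3 1*A 4 2*A 5 0 + A 0 5*A 1 4*A 2 3*A 3 2*A 4 0*A 5 1 - A 0 5*A 1 4*A 2 3*A 3 2*A 4 1*A 5 0 := by
  rw [Matrix.det_succ_row_zero, Fin.sum_univ_six]
  simp only [detFive, Matrix.submatrix_apply, finSucc_3_0, finSucc_3_1, finSucc_3_2, finSucc_4_0, finSucc_4_1, finSucc_4_2, finSucc_4_3, finSucc_5_0, finSucc_5_1, finSucc_5_2, finSucc_5_3, finSucc_5_4, finSA_3_0_0, finSA_3_0_1, finSA_3_0_2, finSA_3_1_0, finSA_3_1_1, finSA_3_1_2, finSA_3_2_0, finSA_3_2_1, finSA_3_2_2, finSA_3_3_0, finSA_3_3_1, finSA_3_3_2, finSA_4_0_0, finSA_4_0_1, finSA_4_0_2, finSA_4_0_3, finSA_4_1_0, finSA_4_1_1, finSA_4_1_2, finSA_4_1_3, finSA_4_2_0,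 finSA_4_2_1, finSA_4_2_2, finSA_4_2_3, finSA_4_3_0, finSA_4_3_1, finSA_4_3_2, finSA_4_3_3, finSA_4_4_0, finSA_4_4_1, finSA_4_4_2, finSA_4_4_3, finSA_5_0_0, finSA_5_0_1, finSA_5_0_2, finSA_5_0_3, finSA_5_0_4, finSA_5_1_0, finSA_5_1_1, finSA_5_1_2, finSA_5_1_3, finSA_5_1_4, finSA_5_2_0, finSA_5_2_1, finSA_5_2_2, finSA_5_2_3, finSA_5_2_4, finSA_5_3_0, finSA_5_3_1, finSA_5_3_2, finSA_5_3_3, finSA_5_3_4, finSA_5_4_0, finSA_5_4_1, finSA_5_4_2, finSA_5_4_3, finSA_5_4_4, finSA_5_5_0, finSA_5_5_1, finSA_5_5_2, finSA_5_5_3, finSA_5_5_4, finVal_4_0, finVal_4_1, finVal_4_2, finVal_4_3, finVal_5_0, finVal_5_1, finVal_5_2, finVal_5_3, finVal_5_4, finVal_6_0, finVal_6_1, finVal_6_2, finVal_6_3, finVal_6_4, finVal_6_5]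
  ring


/-- plain coordinate inner product of two `Fin 3`-vectors -/
def ip3 (u v : Fin 3 → ℝ) : ℝ := u 0 * v 0 + u 1 * v 1 + u 2 * v 2

/-- coordinate difference vector of two points -/
def dv (p q : EuclideanSpace ℝ (Fin 3)) : Fin 3 → ℝ := fun k => p k - q k

/-- the 3×3 determinant of the difference vectors of four points -/
noncomputable def gd (p0 p1 p2 p3 : EuclideanSpace ℝ (Fin 3)) : ℝ :=
  Matrix.det !![dv p1 p0 0, dv p1 p0 1, dv p1 p0 2;
                dv p2 p0 0, dv p2 p0 1, dv p2 p0 2;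
                dv p3 p0 0, dv p3 p0 1, dv p3 p0 2]

lemma dist_sq_diag (p q : EuclideanSpace ℝ (Fin 3)) :
    dist p q ^ 2 = ip3 (dv q p) (dv q p) := by
  rw [EuclideanSpace.dist_eq, Real.sq_sqrt (by positivity)]
  simp [ip3, dv, Fin.sum_univ_three, Real.dist_eq, sq_abs]
  ring

lemma dist_sq_base (p q r : EuclideanSpace ℝ (Fin 3)) :
    dist q r ^ 2 = ip3 (dv q p) (dv q p) + ip3 (dv r p) (dv r p)
      - 2 * ip3 (dv q p) (dv r p) := by
  rw [EuclideanSpace.dist_eq, Real.sq_sqrt (by positivity)]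
  simp [ip3, dv, Fin.sum_univ_three, Real.dist_eq, sq_abs]
  ring

lemma gram3 (u v w : Fin 3 → ℝ) :
    Matrix.det !![ip3 u u, ip3 u v, ip3 u w;
                  ip3 u v, ip3 v v, ip3 v w;
                  ip3 u w, ip3 v w, ip3 w w]
      = (Matrix.det !![u 0, u 1, u 2; v 0, v 1, v 2; w 0, w 1, w 2]) ^ 2 := by
  simp only [Matrix.det_fin_three, Matrix.cons_val', Matrix.cons_val_zero, Matrix.cons_val_one,
    Matrix.head_cons, Matrix.head_fin_const, Matrix.empty_val', Matrix.cons_val_fin_one,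
    Matrix.cons_val_two, Matrix.cons_val_succ, Matrix.vecHead, Matrix.vecTail,
    Matrix.of_apply, Function.comp, ip3]
  ring

lemma gram4 (u v w z : Fin 3 → ℝ) :
    Matrix.det !![ip3 u u, ip3 u v, ip3 u w, ip3 u z;
                  ip3 u v, ip3 v v, ip3 v w, ip3 v z;
                  ip3 u w, ip3 v w, ip3 w w, ip3 w z;
                  ip3 u z, ip3 v z, ip3 w z, ip3 z z] = 0 := by
  rw [detFour]
  simp only [Matrix.cons_val', Matrix.cons_val_zero, Matrix.cons_val_one,
    Matrix.head_cons, Matrix.head_fin_const, Matrix.empty_val', Matrix.cons_val_fin_one,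
    Matrix.cons_val_two, Matrix.cons_val_three, Matrix.cons_val_succ,
    Matrix.vecHead, Matrix.vecTail, Matrix.of_apply, Function.comp, ip3]
  ring

lemma lemQ (a b c d e f : ℝ) :
    cmQ a b c (a + b - 2*d) (a + c - 2*e) (b + c - 2*f)
      = 8 * Matrix.det !![a, d, e; d, b, f; e, f, c] := by
  rw [cmQ, detFive]
  simp only [Matrix.det_fin_three, Matrix.cons_val', Matrix.cons_val_zero, Matrix.cons_val_one,
    Matrix.head_cons, Matrix.head_fin_const, Matrix.empty_val', Matrix.cons_val_fin_one,
    Matrix.cons_val_two, Matrix.cons_val_three, Matrix.cons_val_four,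
    Matrix.cons_val_succ, Matrix.vecHead, Matrix.vecTail, Matrix.of_apply, Function.comp]
  ring

lemma lemP (a b c g d e f h i j : ℝ) :
    cmP a b c g (a + b - 2*d) (a + c - 2*e) (a + g - 2*f) (b + c - 2*h) (b + g - 2*i)
        (c + g - 2*j)
      = -16 * Matrix.det !![a, d, e, f; d, b, h, i; e, h, c, j; f, i, j, g] := by
  rw [cmP, detSix]
  simp only [detFour, Matrix.cons_val', Matrix.cons_val_zero, Matrix.cons_val_one,
    Matrix.head_cons, Matrix.head_fin_const, Matrix.empty_val', Matrix.cons_val_fin_one,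
    Matrix.cons_val_two, Matrix.cons_val_three, Matrix.cons_val_four,
    Matrix.cons_val_succ, Matrix.vecHead, Matrix.vecTail, Matrix.of_apply, Function.comp,
    show (5 : Fin 6) = (4 : Fin 5).succ from rfl]
  ring

lemma cm4 (p0 p1 p2 p3 : EuclideanSpace ℝ (Fin 3)) :
    cmQ (dist p0 p1 ^ 2) (dist p0 p2 ^ 2) (dist p0 p3 ^ 2)
        (dist p1 p2 ^ 2) (dist p1 p3 ^ 2) (dist p2 p3 ^ 2)
      = 8 * gd p0 p1 p2 p3 ^ 2 := by
  rw [dist_sq_diag p0 p1, dist_sq_diag p0 p2, dist_sq_diag p0 p3,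
    dist_sq_base p0 p1 p2, dist_sq_base p0 p1 p3, dist_sq_base p0 p2 p3, lemQ, gram3]
  rfl

lemma cm5 (p0 p1 p2 p3 p4 : EuclideanSpace ℝ (Fin 3)) :
    cmP (dist p0 p1 ^ 2) (dist p0 p2 ^ 2) (dist p0 p3 ^ 2) (dist p0 p4 ^ 2)
        (dist p1 p2 ^ 2) (dist p1 p3 ^ 2) (dist p1 p4 ^ 2)
        (dist p2 p3 ^ 2) (dist p2 p4 ^ 2) (dist p3 p4 ^ 2) = 0 := by
  rw [dist_sq_diag p0 p1, dist_sq_diag p0 p2, dist_sq_diag p0 p3, dist_sq_diag p0 p4,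
    dist_sq_base p0 p1 p2, dist_sq_base p0 p1 p3, dist_sq_base p0 p1 p4,
    dist_sq_base p0 p2 p3, dist_sq_base p0 p2 p4, dist_sq_base p0 p3 p4, lemP, gram4]
  ring

lemma linear_coord (L : EuclideanSpace ℝ (Fin 3) →ₗ[ℝ] EuclideanSpace ℝ (Fin 3))
    (v : EuclideanSpace ℝ (Fin 3)) (k : Fin 3) :
    L v k = ∑ j, LinearMap.toMatrix (EuclideanSpace.basisFun (Fin 3) ℝ).toBasis
      (EuclideanSpace.basisFun (Fin 3) ℝ).toBasis L k j * v j := by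
  set b := (EuclideanSpace.basisFun (Fin 3) ℝ).toBasis with hb
  have h1 : ∀ (z : EuclideanSpace ℝ (Fin 3)) (i : Fin 3), b.repr z i = z i := by
    intro z i
    rw [hb, OrthonormalBasis.coe_toBasis_repr_apply, EuclideanSpace.basisFun_repr]
  have h2 := LinearMap.toMatrix_mulVec_repr b b L v
  have h3 := congrFun h2 k
  rw [h1 (L v) k] at h3
  rw [← h3, Matrix.mulVec]
  simp only [dotProduct]
  exact Finset.sum_congr rfl fun j _ => by rw [h1 v j]

lemma detA (A : EuclideanSpace ℝ (Fin 3) →ᵃ[ℝ] EuclideanSpace ℝ (Fin 3))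
    (p0 p1 p2 p3 : EuclideanSpace ℝ (Fin 3)) :
    gd (A p0) (A p1) (A p2) (A p3) = LinearMap.det A.linear * gd p0 p1 p2 p3 := by
  have hdv : ∀ (p q : EuclideanSpace ℝ (Fin 3)) (k : Fin 3),
      dv (A p) (A q) k = ∑ j, LinearMap.toMatrix (EuclideanSpace.basisFun (Fin 3) ℝ).toBasis
        (EuclideanSpace.basisFun (Fin 3) ℝ).toBasis A.linear k j * dv p q j := by
    intro p q k
    have h1 : A p - A q = A.linear (p - q) := by
      rw [← vsub_eq_sub, ← vsub_eq_sub, AffineMap.linearMap_vsub]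
    have h2 : dv (A p) (A q) k = (A.linear (p - q)) k := by
      rw [← h1]; rfl
    rw [h2, linear_coord]
    exact Finset.sum_congr rfl fun j _ => rfl
  have hmat : (!![dv (A p1) (A p0) 0, dv (A p1) (A p0) 1, dv (A p1) (A p0) 2;
                  dv (A p2) (A p0) 0, dv (A p2) (A p0) 1, dv (A p2) (A p0) 2;
                  dv (A p3) (A p0) 0, dv (A p3) (A p0) 1, dv (A p3) (A p0) 2] : Matrix (Fin 3) (Fin 3) ℝ)
      = !![dv p1 p0 0, dv p1 p0 1, dv p1 p0 2;
           dv p2 p0 0, dv p2 p0 1, dv p2 p0 2;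
           dv p3 p0 0, dv p3 p0 1, dv p3 p0 2] *
          (LinearMap.toMatrix (EuclideanSpace.basisFun (Fin 3) ℝ).toBasis
            (EuclideanSpace.basisFun (Fin 3) ℝ).toBasis A.linear).transpose := by
    ext i j
    fin_cases i <;> fin_cases j <;>
      simp [Matrix.mul_apply, Fin.sum_univ_three, hdv, Matrix.transpose_apply] <;> ring_nf
  unfold gd
  rw [hmat, Matrix.det_mul, Matrix.det_transpose, LinearMap.det_toMatrix, mul_comm]

end ValencyFiveAux



/-- Lemma 3 of the paper: if `x₀,…,x₄ ∈ ℝ³` (with `x₁ ≠ x₃`,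
`x₂ ≠ x₄`, `x₁ ≠ x₄`) are carried by an invertible affine map `A` with linear
part `L` to `x'₀,…,x'₄`, then the seven-equation system
`⁵q'_j = α · ⁵q_j` (`j = 0,…,4`), `⁵q(t,s,r) = 0`, `⁵q'(t',s',r') = 0` has an
all-positive solution, namely `α = (det L)²`, `t = dist(x₁,x₃)`,
`s = dist(x₂,x₄)`, `r = dist(x₁,x₄)`, `t' = dist(x'₁,x'₃)`, `s' = dist(x'₂,x'₄)`,
`r' = dist(x'₁,x'₄)`. -/
theorem valency_five_system_has_positive_solution
    (x : Fin 5 → EuclideanSpace ℝ (Fin 3))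
    (h13 : x 1 ≠ x 3) (h24 : x 2 ≠ x 4) (h14 : x 1 ≠ x 4)
    (A : EuclideanSpace ℝ (Fin 3) →ᵃ[ℝ] EuclideanSpace ℝ (Fin 3))
    (hA : Function.Bijective A)
    (x' : Fin 5 → EuclideanSpace ℝ (Fin 3)) (hx' : ∀ i, x' i = A (x i)) :
    0 < (LinearMap.det A.linear) ^ 2 ∧
      0 < dist (x 1) (x 3) ∧ 0 < dist (x 2) (x 4) ∧ 0 < dist (x 1) (x 4) ∧
      0 < dist (x' 1) (x' 3) ∧ 0 < dist (x' 2) (x' 4) ∧ 0 < dist (x' 1) (x' 4) ∧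
      q50 x' (dist (x' 1) (x' 3)) (dist (x' 2) (x' 4)) (dist (x' 1) (x' 4)) =
        (LinearMap.det A.linear) ^ 2 *
          q50 x (dist (x 1) (x 3)) (dist (x 2) (x 4)) (dist (x 1) (x 4)) ∧
      q51 x' (dist (x' 2) (x' 4)) =
        (LinearMap.det A.linear) ^ 2 * q51 x (dist (x 2) (x 4)) ∧
      q52 x' (dist (x' 1) (x' 3)) (dist (x' 1) (x' 4)) =
        (LinearMap.det A.linear) ^ 2 * q52 x (dist (x 1) (x 3)) (dist (x 1) (x 4)) ∧
      q53 x' (dist (x' 2) (x' 4)) (dist (x' 1) (x' 4)) =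
        (LinearMap.det A.linear) ^ 2 * q53 x (dist (x 2) (x 4)) (dist (x 1) (x 4)) ∧
      q54 x' (dist (x' 1) (x' 3)) =
        (LinearMap.det A.linear) ^ 2 * q54 x (dist (x 1) (x 3)) ∧
      q5full x (dist (x 1) (x 3)) (dist (x 2) (x 4)) (dist (x 1) (x 4)) = 0 ∧
      q5full x' (dist (x' 1) (x' 3)) (dist (x' 2) (x' 4)) (dist (x' 1) (x' 4)) = 0 := by
  classical
  have hlb : Function.Bijective A.linear := (AffineMap.linear_bijective_iff A).mpr hA
  have hdet : LinearMap.det A.linear ≠ 0 := by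
    intro h
    exact (LinearMap.range_lt_top_of_det_eq_zero h).ne
      (LinearMap.range_eq_top.mpr hlb.surjective)
  have d13' : x' 1 ≠ x' 3 := by
    rw [hx' 1, hx' 3]; exact fun h => h13 (hA.injective h)
  have d24' : x' 2 ≠ x' 4 := by
    rw [hx' 2, hx' 4]; exact fun h => h24 (hA.injective h)
  have d14' : x' 1 ≠ x' 4 := by
    rw [hx' 1, hx' 4]; exact fun h => h14 (hA.injective h)
  refine ⟨pow_two_pos_of_ne_zero hdet, dist_pos.mpr h13, dist_pos.mpr h24,
    dist_pos.mpr h14, dist_pos.mpr d13', dist_pos.mpr d24', dist_pos.mpr d14',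
    ?_, ?_, ?_, ?_, ?_, ?_, ?_⟩
  · have h1 : q50 x' (dist (x' 1) (x' 3)) (dist (x' 2) (x' 4)) (dist (x' 1) (x' 4))
        = 8 * ValencyFiveAux.gd (x' 1) (x' 2) (x' 3) (x' 4) ^ 2 :=
      ValencyFiveAux.cm4 (x' 1) (x' 2) (x' 3) (x' 4)
    have h2 : q50 x (dist (x 1) (x 3)) (dist (x 2) (x 4)) (dist (x 1) (x 4))
        = 8 * ValencyFiveAux.gd (x 1) (x 2) (x 3) (x 4) ^ 2 :=
      ValencyFiveAux.cm4 (x 1) (x 2) (x 3) (x 4)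
    rw [h1, h2, hx' 1, hx' 2, hx' 3, hx' 4, ValencyFiveAux.detA]
    ring
  · have h1 : q51 x' (dist (x' 2) (x' 4))
        = 8 * ValencyFiveAux.gd (x' 0) (x' 2) (x' 3) (x' 4) ^ 2 :=
      ValencyFiveAux.cm4 (x' 0) (x' 2) (x' 3) (x' 4)
    have h2 : q51 x (dist (x 2) (x 4))
        = 8 * ValencyFiveAux.gd (x 0) (x 2) (x 3) (x 4) ^ 2 :=
      ValencyFiveAux.cm4 (x 0) (x 2) (x 3) (x 4)
    rw [h1, h2, hx' 0, hx' 2, hx' 3, hx' 4, ValencyFiveAux.detA]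
    ring
  · have h1 : q52 x' (dist (x' 1) (x' 3)) (dist (x' 1) (x' 4))
        = 8 * ValencyFiveAux.gd (x' 0) (x' 1) (x' 3) (x' 4) ^ 2 :=
      ValencyFiveAux.cm4 (x' 0) (x' 1) (x' 3) (x' 4)
    have h2 : q52 x (dist (x 1) (x 3)) (dist (x 1) (x 4))
        = 8 * ValencyFiveAux.gd (x 0) (x 1) (x 3) (x 4) ^ 2 :=
      ValencyFiveAux.cm4 (x 0) (x 1) (x 3) (x 4)
    rw [h1, h2, hx' 0, hx' 1, hx' 3, hx' 4, ValencyFiveAux.detA]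
    ring
  · have h1 : q53 x' (dist (x' 2) (x' 4)) (dist (x' 1) (x' 4))
        = 8 * ValencyFiveAux.gd (x' 0) (x' 1) (x' 2) (x' 4) ^ 2 :=
      ValencyFiveAux.cm4 (x' 0) (x' 1) (x' 2) (x' 4)
    have h2 : q53 x (dist (x 2) (x 4)) (dist (x 1) (x 4))
        = 8 * ValencyFiveAux.gd (x 0) (x 1) (x 2) (x 4) ^ 2 :=
      ValencyFiveAux.cm4 (x 0) (x 1) (x 2) (x 4)
    rw [h1, h2, hx' 0, hx' 1, hx' 2, hx' 4, ValencyFiveAux.detA]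
    ring
  · have h1 : q54 x' (dist (x' 1) (x' 3))
        = 8 * ValencyFiveAux.gd (x' 0) (x' 1) (x' 2) (x' 3) ^ 2 :=
      ValencyFiveAux.cm4 (x' 0) (x' 1) (x' 2) (x' 3)
    have h2 : q54 x (dist (x 1) (x 3))
        = 8 * ValencyFiveAux.gd (x 0) (x 1) (x 2) (x 3) ^ 2 :=
      ValencyFiveAux.cm4 (x 0) (x 1) (x 2) (x 3)
    rw [h1, h2, hx' 0, hx' 1, hx' 2, hx' 3, ValencyFiveAux.detA]
    ring
  · exact ValencyFiveAux.cm5 (x 0) (x 1) (x 2) (x 3) (x 4)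
  · exact ValencyFiveAux.cm5 (x' 0) (x' 1) (x' 2) (x' 3) (x' 4)
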